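/- arXiv:2601.21200 — 5 statements merged into one kernel-verified Lean document; each statement's English description precedes it below -/
import Mathlib

section
/- Let p : ℝ^d → [0, ∞) be Lebesgue integrable, let A ⊆ ℝ^d be a measurable set with ∫_A p(x) dx > 0, and let (δ_n)_{n≥1} be a sequence with δ_n ∈ (0, 1) for all n and δ_n → 0 as n → ∞. Writing x₁ for the first coordinate of x ∈ ℝ^d, it holds that liminf_{n→∞} (δ_n n)^{−2} ∫_A ( δ_n n cos(n x₁) / (1 + δ_n sin(n x₁)) )² p(x) dx ≥ (1/2) ∫_A p(x) dx. -/
open MeasureTheory Filter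

open Real RealInnerProductSpace FourierTransform in
lemma riemann_lebesgue_cos (d : ℕ) (i0 : Fin d)
    (g : EuclideanSpace ℝ (Fin d) → ℝ) (hg : Integrable g) :
    Tendsto (fun n : ℕ => ∫ v, Real.cos (2 * (n : ℝ) * v i0) * g v) atTop (nhds 0) := by
  have hF : Integrable (fun v : EuclideanSpace ℝ (Fin d) => (g v : ℂ)) := hg.ofReal
  set F : EuclideanSpace ℝ (Fin d) → ℂ := fun v => (g v : ℂ) with hF_def
  set w : ℕ → EuclideanSpace ℝ (Fin d) :=
    fun n => (-((n : ℝ) / Real.pi)) • EuclideanSpace.single i0 (1 : ℝ) with hw_def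
  have hw : Tendsto w atTop (Filter.cocompact (EuclideanSpace ℝ (Fin d))) := by
    rw [← Metric.cobounded_eq_cocompact, ← tendsto_norm_atTop_iff_cobounded]
    have hnorm : ∀ n, ‖w n‖ = (n : ℝ) / Real.pi := by
      intro n
      rw [hw_def, norm_smul, EuclideanSpace.norm_single, norm_one, mul_one, Real.norm_eq_abs,
        abs_neg]
      exact abs_of_nonneg (div_nonneg (Nat.cast_nonneg n) Real.pi_pos.le)
    simp_rw [hnorm]
    exact (tendsto_natCast_atTop_atTop (R := ℝ)).atTop_div_const Real.pi_pos
  have h0 := (tendsto_integral_exp_inner_smul_cocompact (f := F)).comp hw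
  have h1 : Tendsto (fun n => (∫ v, 𝐞 (-⟪v, w n⟫) • F v).re) atTop (nhds 0) := by
    simpa [Function.comp_def] using (Complex.continuous_re.tendsto 0).comp h0
  refine h1.congr fun n => ?_
  have hInt : Integrable fun v => 𝐞 (-⟪v, w n⟫) • F v :=
    (Real.fourierIntegral_convergent_iff (w n)).2 hF
  rw [← RCLike.re_to_complex, ← integral_re hInt]
  refine integral_congr_ae (Eventually.of_forall fun v => ?_)
  have hinner : ⟪v, w n⟫ = -((n : ℝ) / Real.pi) * v i0 := by
    rw [hw_def]
    simp [real_inner_smul_right, EuclideanSpace.inner_single_right]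
  simp only [RCLike.re_to_complex, Circle.smul_def, Real.fourierChar_apply, hinner]
  have h2 : 2 * Real.pi * -(-((n : ℝ) / Real.pi) * v i0) = 2 * (n : ℝ) * v i0 := by
    field_simp
  rw [h2]
  simp [Complex.mul_re, Complex.exp_ofReal_mul_I_re, hF_def, Complex.exp_ofReal_mul_I_im]
  left
  rw [show (2 * (n : ℂ) * ((v i0 : ℝ) : ℂ)) = ((2 * (n : ℝ) * v i0 : ℝ) : ℂ) by push_cast; ring]
  exact Complex.exp_ofReal_mul_I_re _

theorem stmt2 (d : ℕ) (hd : 0 < d)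
    (p : EuclideanSpace ℝ (Fin d) → ℝ)
    (hp0 : ∀ x, 0 ≤ p x) (hp : Integrable p)
    (A : Set (EuclideanSpace ℝ (Fin d))) (hA : MeasurableSet A)
    (hApos : 0 < ∫ x in A, p x)
    (δ : ℕ → ℝ) (hδ : ∀ n, δ n ∈ Set.Ioo (0 : ℝ) 1)
    (hδ0 : Tendsto δ atTop (nhds 0)) :
    (1 / 2) * ∫ x in A, p x ≤
      liminf (fun n : ℕ =>
        ((δ n * (n : ℝ)) ^ 2)⁻¹ *
          ∫ x in A,
            (δ n * (n : ℝ) * Real.cos ((n : ℝ) * x ⟨0, hd⟩) /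
              (1 + δ n * Real.sin ((n : ℝ) * x ⟨0, hd⟩))) ^ 2 * p x) atTop := by
  set i0 : Fin d := ⟨0, hd⟩ with hi0
  set I : ℝ := ∫ x in A, p x with hI
  have hcont_x1 : Continuous fun x : EuclideanSpace ℝ (Fin d) => x i0 :=
    (EuclideanSpace.proj (𝕜 := ℝ) i0).continuous
  set u : ℕ → ℝ := fun n : ℕ =>
      ((δ n * (n : ℝ)) ^ 2)⁻¹ *
        ∫ x in A,
          (δ n * (n : ℝ) * Real.cos ((n : ℝ) * x i0) /
            (1 + δ n * Real.sin ((n : ℝ) * x i0))) ^ 2 * p x with hu_def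
  set ε : ℕ → ℝ := fun n : ℕ => ∫ x in A, Real.cos (2 * (n : ℝ) * x i0) * p x with hε_def
  -- Riemann-Lebesgue for the indicator
  have hεlim : Tendsto ε atTop (nhds 0) := by
    have h := riemann_lebesgue_cos d i0 (A.indicator p) (hp.indicator hA)
    refine h.congr fun n => ?_
    show _ = ∫ x in A, Real.cos (2 * (n : ℝ) * x i0) * p x
    rw [← integral_indicator hA]
    refine integral_congr_ae (Eventually.of_forall fun x => ?_)
    by_cases hx : x ∈ A <;> simp [hx]
  have hden : ∀ (n : ℕ) (x : EuclideanSpace ℝ (Fin d)),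
      0 < 1 + δ n * Real.sin ((n : ℝ) * x i0) := by
    intro n x
    have h1 := (hδ n).1
    have h2 := (hδ n).2
    nlinarith [Real.neg_one_le_sin ((n : ℝ) * x i0), Real.sin_le_one ((n : ℝ) * x i0)]
  have hu0 : ∀ n, 0 ≤ u n := by
    intro n
    refine mul_nonneg (inv_nonneg.2 (sq_nonneg _)) (integral_nonneg fun x => ?_)
    exact mul_nonneg (sq_nonneg _) (hp0 x)
  -- continuity facts
  have hcont_cos : ∀ c : ℝ, Continuous fun x : EuclideanSpace ℝ (Fin d) => Real.cos (c * x i0) :=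
    fun c => Real.continuous_cos.comp (continuous_const.mul hcont_x1)
  have hcont_sin : ∀ c : ℝ, Continuous fun x : EuclideanSpace ℝ (Fin d) => Real.sin (c * x i0) :=
    fun c => Real.continuous_sin.comp (continuous_const.mul hcont_x1)
  -- integrability facts
  have hint_cos2 : ∀ n : ℕ,
      IntegrableOn (fun x => Real.cos ((n : ℝ) * x i0) ^ 2 * p x) A := by
    intro n
    refine hp.integrableOn.bdd_mul (c := 1) (((hcont_cos n).pow 2).aestronglyMeasurable) (Eventually.of_forall fun x => ?_)
    rw [Real.norm_eq_abs, abs_of_nonneg (sq_nonneg _)]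
    exact Real.cos_sq_le_one _
  have hint_cos2n : ∀ n : ℕ,
      IntegrableOn (fun x => Real.cos (2 * (n : ℝ) * x i0) * p x) A := by
    intro n
    refine hp.integrableOn.bdd_mul (c := 1) ((hcont_cos (2 * n)).aestronglyMeasurable) (Eventually.of_forall fun x => ?_)
    rw [Real.norm_eq_abs]
    exact Real.abs_cos_le_one _
  have hint_frac : ∀ n : ℕ,
      IntegrableOn (fun x =>
        (Real.cos ((n : ℝ) * x i0) / (1 + δ n * Real.sin ((n : ℝ) * x i0))) ^ 2 * p x) A := by
    intro n
    have hc : Continuous fun x : EuclideanSpace ℝ (Fin d) =>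
        (Real.cos ((n : ℝ) * x i0) / (1 + δ n * Real.sin ((n : ℝ) * x i0))) ^ 2 :=
      (((hcont_cos n).div (continuous_const.add (continuous_const.mul (hcont_sin n)))
        fun x => (hden n x).ne').pow 2)
    refine hp.integrableOn.bdd_mul (c := ((1 - δ n) ^ 2)⁻¹) hc.aestronglyMeasurable (Eventually.of_forall fun x => ?_)
    have h1δ : 0 < 1 - δ n := by linarith [(hδ n).2]
    have hle : 1 - δ n ≤ 1 + δ n * Real.sin ((n : ℝ) * x i0) := by
      nlinarith [Real.neg_one_le_sin ((n : ℝ) * x i0), (hδ n).1]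
    rw [Real.norm_eq_abs, abs_of_nonneg (sq_nonneg _), div_pow, ← one_div]
    refine div_le_div₀ (by norm_num) (Real.cos_sq_le_one _) (by positivity) ?_
    nlinarith [hden n x]
  -- expression of u n for n ≥ 1
  have hueq : ∀ n : ℕ, 1 ≤ n → u n = ∫ x in A,
      (Real.cos ((n : ℝ) * x i0) / (1 + δ n * Real.sin ((n : ℝ) * x i0))) ^ 2 * p x := by
    intro n hn
    have hn1 : (1 : ℝ) ≤ (n : ℝ) := by exact_mod_cast hn
    have hnn : (0 : ℝ) < δ n * n := mul_pos (hδ n).1 (lt_of_lt_of_le one_pos hn1)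
    rw [hu_def]
    have hptw : ∀ x : EuclideanSpace ℝ (Fin d),
        (δ n * (n : ℝ) * Real.cos ((n : ℝ) * x i0) /
            (1 + δ n * Real.sin ((n : ℝ) * x i0))) ^ 2 * p x
          = (δ n * (n : ℝ)) ^ 2 *
            ((Real.cos ((n : ℝ) * x i0) / (1 + δ n * Real.sin ((n : ℝ) * x i0))) ^ 2 * p x) := by
      intro x
      rw [mul_div_assoc, mul_pow]
      ring
    simp only [hptw]
    rw [integral_const_mul, ← mul_assoc, inv_mul_cancel₀ (by positivity), one_mul]
  -- key lower bound
  have hL_le : ∀ n : ℕ, 1 ≤ n → ((1 + δ n) ^ 2)⁻¹ * (1 / 2 * I + 1 / 2 * ε n) ≤ u n := by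
    intro n hn
    have hδn := hδ n
    have hsplit : ∫ x in A, Real.cos ((n : ℝ) * x i0) ^ 2 * p x = 1 / 2 * I + 1 / 2 * ε n := by
      have hptw : ∀ x : EuclideanSpace ℝ (Fin d),
          Real.cos ((n : ℝ) * x i0) ^ 2 * p x
            = 1 / 2 * p x + 1 / 2 * (Real.cos (2 * (n : ℝ) * x i0) * p x) := by
        intro x
        rw [Real.cos_sq, ← mul_assoc]
        ring
      rw [integral_congr_ae (Eventually.of_forall hptw), integral_add
        (hp.integrableOn.const_mul _) ((hint_cos2n n).const_mul _),
        integral_const_mul, integral_const_mul]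
    rw [hueq n hn, ← hsplit, ← integral_const_mul]
    refine integral_mono ((hint_cos2 n).const_mul _) (hint_frac n) fun x => ?_
    have h1 := hden n x
    have h2 : (1 + δ n * Real.sin ((n : ℝ) * x i0)) ^ 2 ≤ (1 + δ n) ^ 2 := by
      have hle : 1 + δ n * Real.sin ((n : ℝ) * x i0) ≤ 1 + δ n := by
        nlinarith [Real.sin_le_one ((n : ℝ) * x i0), hδn.1]
      exact pow_le_pow_left₀ h1.le hle 2
    have h3 : ((1 + δ n) ^ 2)⁻¹ * Real.cos ((n : ℝ) * x i0) ^ 2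
        ≤ (Real.cos ((n : ℝ) * x i0) / (1 + δ n * Real.sin ((n : ℝ) * x i0))) ^ 2 := by
      rw [div_pow, inv_mul_eq_div]
      exact div_le_div₀ (sq_nonneg _) le_rfl (by positivity) h2
    calc ((1 + δ n) ^ 2)⁻¹ * (Real.cos ((n : ℝ) * x i0) ^ 2 * p x)
        = ((1 + δ n) ^ 2)⁻¹ * Real.cos ((n : ℝ) * x i0) ^ 2 * p x := by ring
      _ ≤ _ := mul_le_mul_of_nonneg_right h3 (hp0 x)
  -- u is eventually bounded above
  have hbdd : IsBoundedUnder (· ≤ ·) atTop u := by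
    refine isBoundedUnder_of_eventually_le (a := 4 * I) ?_
    have hsmall : ∀ᶠ n : ℕ in atTop, δ n ≤ 1 / 2 :=
      hδ0.eventually (eventually_le_nhds (by norm_num))
    filter_upwards [hsmall, eventually_ge_atTop 1] with n h12 h1n
    rw [hueq n h1n]
    have hb : ∫ x in A,
        (Real.cos ((n : ℝ) * x i0) / (1 + δ n * Real.sin ((n : ℝ) * x i0))) ^ 2 * p x
        ≤ ∫ x in A, 4 * p x := by
      refine integral_mono (hint_frac n) (hp.integrableOn.const_mul 4) fun x => ?_
      have h1 := hden n x
      have hq : (1 : ℝ) / 2 ≤ 1 + δ n * Real.sin ((n : ℝ) * x i0) := by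
        nlinarith [Real.neg_one_le_sin ((n : ℝ) * x i0), (hδ n).1]
      have hfr : (Real.cos ((n : ℝ) * x i0) / (1 + δ n * Real.sin ((n : ℝ) * x i0))) ^ 2
          ≤ 4 := by
        rw [div_pow, div_le_iff₀ (by positivity)]
        nlinarith [Real.cos_sq_le_one ((n : ℝ) * x i0)]
      exact mul_le_mul_of_nonneg_right hfr (hp0 x)
    calc _ ≤ ∫ x in A, 4 * p x := hb
      _ = 4 * I := by rw [integral_const_mul]
  -- limit of the lower bound
  have hLlim : Tendsto (fun n => ((1 + δ n) ^ 2)⁻¹ * (1 / 2 * I + 1 / 2 * ε n)) atTop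
      (nhds ((1 / 2) * I)) := by
    have h1 : Tendsto (fun n => ((1 + δ n) ^ 2)⁻¹) atTop (nhds (((1 + 0) ^ 2)⁻¹ : ℝ)) :=
      ((hδ0.const_add 1).pow 2).inv₀ (by norm_num)
    have h2 : Tendsto (fun n => 1 / 2 * I + 1 / 2 * ε n) atTop
        (nhds (1 / 2 * I + 1 / 2 * 0)) := tendsto_const_nhds.add (hεlim.const_mul _)
    have h3 := h1.mul h2
    convert h3 using 2
    norm_num
  calc (1 / 2) * I = liminf (fun n => ((1 + δ n) ^ 2)⁻¹ * (1 / 2 * I + 1 / 2 * ε n)) atTop :=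
      (hLlim.liminf_eq).symm
    _ ≤ liminf u atTop :=
      liminf_le_liminf (eventually_atTop.2 ⟨1, hL_le⟩)
        hLlim.isBoundedUnder_ge hbdd.isCoboundedUnder_ge
end

section
/- There exists a universal constant C > 0 (independent of d, μ, λ, σ, ε) with the following property. Let μ be a probability measure on ℝ^d, λ ∈ (0, 1], σ > 0, and let f_μ be the Gaussian-smoothed density of μ. Then for every ε ∈ (0, 1), the probability measure with density f_μ assigns mass at most ε to the set { x ∈ ℝ^d : ‖∇ log f_μ(x)‖₂ > C √(d + log(1/ε)) / σ }. -/
open MeasureTheory Real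
open scoped NNReal ENNReal

/-- The Gaussian kernel `(2πσ²)^{-d/2} exp(-‖x - λz‖²/(2σ²))`. -/
noncomputable def gaussKernel (d : ℕ) (lam sig : ℝ)
    (x z : EuclideanSpace ℝ (Fin d)) : ℝ :=
  (2 * π * sig ^ 2) ^ (-(d : ℝ) / 2) * Real.exp (-‖x - lam • z‖ ^ 2 / (2 * sig ^ 2))

/-- The Gaussian-smoothed density of a measure `μ`. -/
noncomputable def smoothedDensity (d : ℕ) (lam sig : ℝ)
    (μ : Measure (EuclideanSpace ℝ (Fin d))) (x : EuclideanSpace ℝ (Fin d)) : ℝ :=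
  ∫ z, gaussKernel d lam sig x z ∂μ

noncomputable section

variable {d : ℕ}

local notation "E" => EuclideanSpace ℝ (Fin d)

/-- bare Gaussian kernel without normalization -/
def gKer (lam sig : ℝ) (x z : EuclideanSpace ℝ (Fin d)) : ℝ :=
  rexp (-‖x - lam • z‖ ^ 2 / (2 * sig ^ 2))

lemma gKer_pos (lam sig : ℝ) (x z : E) : 0 < gKer lam sig x z := exp_pos _

lemma gKer_le_one {sig : ℝ} (hs : 0 < sig) (lam : ℝ) (x z : E) : gKer lam sig x z ≤ 1 := by
  apply exp_le_one_iff.2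
  have : (0:ℝ) ≤ ‖x - lam • z‖ ^ 2 := by positivity
  have h2 : (0:ℝ) < 2 * sig ^ 2 := by positivity
  apply div_nonpos_of_nonpos_of_nonneg <;> [linarith; positivity]

lemma gKer_continuous (lam sig : ℝ) :
    Continuous (fun p : EuclideanSpace ℝ (Fin d) × EuclideanSpace ℝ (Fin d) =>
      gKer lam sig p.1 p.2) := by
  apply Real.continuous_exp.comp
  fun_prop

/-- key scalar bound : t * exp(-t²/(2σ²)) ≤ 2σ -/
lemma mul_exp_le {sig : ℝ} (hs : 0 < sig) {t : ℝ} (ht : 0 ≤ t) :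
    t * rexp (-t ^ 2 / (2 * sig ^ 2)) ≤ 2 * sig := by
  rcases le_or_gt t (2 * sig) with h | h
  · calc t * rexp (-t ^ 2 / (2 * sig ^ 2)) ≤ t * 1 := by
          apply mul_le_mul_of_nonneg_left _ ht
          apply exp_le_one_iff.2
          have : (0:ℝ) ≤ t ^ 2 := by positivity
          have h2 : (0:ℝ) < 2 * sig ^ 2 := by positivity
          apply div_nonpos_of_nonpos_of_nonneg <;> [linarith; positivity]
      _ ≤ 2 * sig := by linarith
  · have h1 : t / sig ≤ t ^ 2 / (2 * sig ^ 2) := by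
      have ht0 : 0 < t := lt_trans (by positivity) h
      rw [div_le_div_iff₀ hs (by positivity)]
      nlinarith [mul_pos hs ht0, mul_le_mul_of_nonneg_right h.le (mul_pos ht0 hs).le]
    have h2 : rexp (-t ^ 2 / (2 * sig ^ 2)) ≤ rexp (-(t / sig)) := by
      apply exp_le_exp.2; rw [neg_div]; linarith
    have h3 : t * rexp (-(t / sig)) ≤ sig := by
      have hu : t / sig ≤ rexp (t / sig) := (Real.add_one_le_exp _).trans' (by linarith)
      rw [exp_neg]
      rw [mul_inv_le_iff₀ (exp_pos _)]
      calc t = sig * (t / sig) := by field_simp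
        _ ≤ sig * rexp (t / sig) := by
            apply mul_le_mul_of_nonneg_left hu hs.le
    linarith [mul_le_mul_of_nonneg_left h2 ht]


variable {lam sig : ℝ}

/-- integrability of bounded continuous functions against finite measures -/
lemma integrable_bdd {F : Type*} [NormedAddCommGroup F] {f : EuclideanSpace ℝ (Fin d) → F}
    (hf : Continuous f) (M : ℝ) (hM : ∀ z, ‖f z‖ ≤ M)
    (μ : Measure (EuclideanSpace ℝ (Fin d))) [IsFiniteMeasure μ] : Integrable f μ :=
  Integrable.mono' (integrable_const M) hf.aestronglyMeasurable (Filter.Eventually.of_forall hM)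

lemma gKer_mul_norm_le (hs : 0 < sig) (x z : E) :
    gKer lam sig x z * ‖x - lam • z‖ ≤ 2 * sig := by
  rw [mul_comm]; exact mul_exp_le hs (norm_nonneg _)

def mFn (lam sig : ℝ) (μ : Measure (EuclideanSpace ℝ (Fin d)))
    (x : EuclideanSpace ℝ (Fin d)) : ℝ := ∫ z, gKer lam sig x z ∂μ

def wFn (lam sig : ℝ) (μ : Measure (EuclideanSpace ℝ (Fin d)))
    (x : EuclideanSpace ℝ (Fin d)) : EuclideanSpace ℝ (Fin d) :=
  ∫ z, (-(sig ^ 2)⁻¹ * gKer lam sig x z) • (x - lam • z) ∂μ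

variable {μ : Measure (EuclideanSpace ℝ (Fin d))} [IsProbabilityMeasure μ]

lemma integrable_gKer (hs : 0 < sig) (x : E) : Integrable (fun z => gKer lam sig x z) μ :=
  integrable_bdd (by have := gKer_continuous (d := d) lam sig; fun_prop) 1
    (fun z => by rw [Real.norm_eq_abs, abs_of_pos (gKer_pos _ _ _ _)];
                 exact gKer_le_one hs lam x z) μ

lemma mFn_pos (hs : 0 < sig) (x : E) : 0 < mFn lam sig μ x := by
  rcases lt_or_eq_of_le (integral_nonneg (fun z => (gKer_pos lam sig x z).le) :
      (0:ℝ) ≤ mFn lam sig μ x) with h | h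
  · exact h
  · exfalso
    have h0 := (integral_eq_zero_iff_of_nonneg (fun z => (gKer_pos lam sig x z).le)
      (integrable_gKer hs x)).1 h.symm
    have : ∀ᵐ z ∂μ, False := by
      filter_upwards [h0] with z hz
      exact absurd hz (ne_of_gt (gKer_pos lam sig x z))
    rw [ae_iff] at this
    simpa using this

lemma mFn_le_one (hs : 0 < sig) (x : E) : mFn lam sig μ x ≤ 1 := by
  calc mFn lam sig μ x ≤ ∫ _z, (1:ℝ) ∂μ :=
        integral_mono (integrable_gKer hs x) (integrable_const 1)
          (fun z => gKer_le_one hs lam x z)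
    _ = 1 := by simp

lemma mFn_continuous (hs : 0 < sig) : Continuous (mFn lam sig μ) := by
  apply continuous_of_dominated (bound := fun _ => (1:ℝ))
  · intro x
    have := gKer_continuous (d := d) lam sig
    exact (Continuous.aestronglyMeasurable (by fun_prop))
  · intro x
    refine Filter.Eventually.of_forall (fun z => ?_)
    rw [Real.norm_eq_abs, abs_of_pos (gKer_pos _ _ _ _)]
    exact gKer_le_one hs lam x z
  · exact integrable_const 1
  · refine Filter.Eventually.of_forall (fun z => ?_)
    have := gKer_continuous (d := d) lam sig
    fun_prop

lemma wFn_integrand_norm (hs : 0 < sig) (x z : E) :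
    ‖(-(sig ^ 2)⁻¹ * gKer lam sig x z) • (x - lam • z)‖ ≤ 2 / sig := by
  rw [norm_smul, Real.norm_eq_abs, abs_mul, abs_neg, abs_inv, abs_of_pos (by positivity : (0:ℝ) < sig^2),
    abs_of_pos (gKer_pos lam sig x z)]
  rw [mul_assoc]
  have h1 : gKer lam sig x z * ‖x - lam • z‖ ≤ 2 * sig := gKer_mul_norm_le hs x z
  calc (sig ^ 2)⁻¹ * (gKer lam sig x z * ‖x - lam • z‖) ≤ (sig ^ 2)⁻¹ * (2 * sig) := by
        apply mul_le_mul_of_nonneg_left h1 (by positivity)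
    _ = 2 / sig := by field_simp

lemma wFn_continuous (hs : 0 < sig) : Continuous (wFn lam sig μ) := by
  apply continuous_of_dominated (bound := fun _ => 2 / sig)
  · intro x
    have := gKer_continuous (d := d) lam sig
    exact Continuous.aestronglyMeasurable (by fun_prop)
  · intro x
    exact Filter.Eventually.of_forall (fun z => wFn_integrand_norm hs x z)
  · exact integrable_const _
  · refine Filter.Eventually.of_forall (fun z => ?_)
    have := gKer_continuous (d := d) lam sig
    fun_prop


/-- the pointwise fderiv of the kernel in `x` -/
def dKer (lam sig : ℝ) (x z : EuclideanSpace ℝ (Fin d)) :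
    EuclideanSpace ℝ (Fin d) →L[ℝ] ℝ :=
  (-(sig ^ 2)⁻¹ * gKer lam sig x z) • (innerSL ℝ (x - lam • z))

lemma dKer_eq_toDual (x z : E) :
    dKer lam sig x z = (InnerProductSpace.toDual ℝ (EuclideanSpace ℝ (Fin d)))
      ((-(sig ^ 2)⁻¹ * gKer lam sig x z) • (x - lam • z)) := by
  apply ContinuousLinearMap.ext
  intro v
  simp [dKer, InnerProductSpace.toDual_apply_apply, inner_smul_left, real_inner_comm]

lemma dKer_norm_le (hs : 0 < sig) (x z : E) : ‖dKer lam sig x z‖ ≤ 2 / sig := by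
  rw [dKer_eq_toDual, (InnerProductSpace.toDual ℝ _).norm_map]
  exact wFn_integrand_norm hs x z

lemma hasFDerivAt_gKer (hs : 0 < sig) (x z : E) :
    HasFDerivAt (fun x => gKer lam sig x z) (dKer lam sig x z) x := by
  have hu : HasFDerivAt (fun x : E => x - lam • z)
      (ContinuousLinearMap.id ℝ (EuclideanSpace ℝ (Fin d))) x :=
    (hasFDerivAt_id x).sub_const _
  have hinner := (hu.inner ℝ hu)
  have hq := (hinner.const_mul (-(2 * sig ^ 2)⁻¹)).exp
  have hfun : (fun x : E => rexp (-(2 * sig ^ 2)⁻¹ *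
      (inner ℝ (x - lam • z) (x - lam • z) : ℝ))) = fun x => gKer lam sig x z := by
    funext y
    rw [real_inner_self_eq_norm_sq, gKer]
    ring_nf
  rw [hfun] at hq
  refine hq.congr_fderiv ?_
  symm
  apply ContinuousLinearMap.ext
  intro v
  simp only [dKer, ContinuousLinearMap.smul_apply, innerSL_apply_apply,
    ContinuousLinearMap.coe_smul', Pi.smul_apply, ContinuousLinearMap.coe_comp',
    Function.comp_apply, ContinuousLinearMap.prod_apply, ContinuousLinearMap.coe_id', id_eq,
    fderivInnerCLM_apply]
  rw [real_inner_comm (v) (x - lam • z)]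
  have : rexp (-(2 * sig ^ 2)⁻¹ * (inner ℝ (x - lam • z) (x - lam • z) : ℝ)) = gKer lam sig x z := by
    rw [real_inner_self_eq_norm_sq, gKer]; ring_nf
  rw [smul_eq_mul, smul_eq_mul, smul_eq_mul, this]
  ring

lemma hasFDerivAt_mFn (hs : 0 < sig) (x : E) :
    HasFDerivAt (mFn lam sig μ) (∫ z, dKer lam sig x z ∂μ) x := by
  apply hasFDerivAt_integral_of_dominated_of_fderiv_le (s := Set.univ) (bound := fun _ => 2 / sig)
    (F' := fun x z => dKer lam sig x z) Filter.univ_mem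
  · refine Filter.Eventually.of_forall (fun y => ?_)
    have := gKer_continuous (d := d) lam sig
    exact Continuous.aestronglyMeasurable (by fun_prop)
  · exact integrable_gKer hs x
  · apply Continuous.aestronglyMeasurable
    simp only [dKer_eq_toDual]
    have := gKer_continuous (d := d) lam sig
    apply Continuous.comp (LinearIsometryEquiv.continuous _)
    fun_prop
  · exact Filter.Eventually.of_forall (fun z y _ => dKer_norm_le hs y z)
  · exact integrable_const _
  · exact Filter.Eventually.of_forall (fun z y _ => hasFDerivAt_gKer hs y z)

lemma integral_dKer_eq (hs : 0 < sig) (x : E) :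
    ∫ z, dKer lam sig x z ∂μ = (InnerProductSpace.toDual ℝ (EuclideanSpace ℝ (Fin d)))
      (wFn lam sig μ x) := by
  simp only [dKer_eq_toDual]
  exact (InnerProductSpace.toDual ℝ (EuclideanSpace ℝ (Fin d))).toLinearIsometry.integral_comp_comm _

lemma hasGradientAt_mFn (hs : 0 < sig) (x : E) :
    HasGradientAt (mFn lam sig μ) (wFn lam sig μ x) x := by
  rw [hasGradientAt_iff_hasFDerivAt, ← integral_dKer_eq hs x]
  exact hasFDerivAt_mFn hs x


lemma smoothedDensity_eq (x : E) :
    smoothedDensity d lam sig μ x = (2 * π * sig ^ 2) ^ (-(d : ℝ) / 2) * mFn lam sig μ x := by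
  rw [smoothedDensity, mFn, ← integral_const_mul]
  rfl

lemma normConst_pos (hs : 0 < sig) : (0:ℝ) < (2 * π * sig ^ 2) ^ (-(d : ℝ) / 2) := by
  apply Real.rpow_pos_of_pos
  positivity

lemma hasGradientAt_log_smoothed (hs : 0 < sig) (x : E) :
    HasGradientAt (fun x => Real.log (smoothedDensity d lam sig μ x))
      ((mFn lam sig μ x)⁻¹ • wFn lam sig μ x) x := by
  have hfun : (fun x => Real.log (smoothedDensity d lam sig μ x)) =
      fun x => Real.log ((2 * π * sig ^ 2) ^ (-(d : ℝ) / 2)) + Real.log (mFn lam sig μ x) := by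
    funext y
    rw [smoothedDensity_eq, Real.log_mul (ne_of_gt (normConst_pos hs))
      (ne_of_gt (mFn_pos hs y))]
  rw [hfun]
  have hlog : HasFDerivAt (fun y => Real.log (mFn lam sig μ y))
      ((mFn lam sig μ x)⁻¹ • (∫ z, dKer lam sig x z ∂μ)) x :=
    (hasFDerivAt_mFn hs x).log (ne_of_gt (mFn_pos hs x))
  have := hlog.const_add (Real.log ((2 * π * sig ^ 2) ^ (-(d : ℝ) / 2)))
  rw [hasGradientAt_iff_hasFDerivAt]
  refine this.congr_fderiv ?_
  rw [integral_dKer_eq hs x, _root_.map_smul]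

lemma gradient_log_smoothed (hs : 0 < sig) (x : E) :
    gradient (fun x => Real.log (smoothedDensity d lam sig μ x)) x =
      (mFn lam sig μ x)⁻¹ • wFn lam sig μ x :=
  (hasGradientAt_log_smoothed hs x).gradient


lemma gKer_mul_sq_norm_le (hs : 0 < sig) (x z : E) :
    gKer lam sig x z * ‖x - lam • z‖ ^ 2 ≤ 8 * sig ^ 2 := by
  set t := ‖x - lam • z‖ with ht
  have ht0 : 0 ≤ t := norm_nonneg _
  have hs' : (0:ℝ) < Real.sqrt 2 * sig := by positivity
  have h1 : t * rexp (-t ^ 2 / (2 * (Real.sqrt 2 * sig) ^ 2)) ≤ 2 * (Real.sqrt 2 * sig) :=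
    mul_exp_le hs' ht0
  have h2 : (Real.sqrt 2 * sig) ^ 2 = 2 * sig ^ 2 := by
    rw [mul_pow, sq_sqrt (by norm_num : (0:ℝ) ≤ 2)]
  rw [h2] at h1
  have h3 : rexp (-t ^ 2 / (2 * (2 * sig ^ 2))) * rexp (-t ^ 2 / (2 * (2 * sig ^ 2)))
      = rexp (-t ^ 2 / (2 * sig ^ 2)) := by
    rw [← Real.exp_add]; congr 1; field_simp; ring
  have he : 0 ≤ rexp (-t ^ 2 / (2 * (2 * sig ^ 2))) := (exp_pos _).le
  have h4 : (t * rexp (-t ^ 2 / (2 * (2 * sig ^ 2)))) ^ 2 ≤ (2 * (Real.sqrt 2 * sig)) ^ 2 := by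
    apply sq_le_sq' _ h1
    nlinarith [mul_nonneg ht0 he]
  have h5 : (2 * (Real.sqrt 2 * sig)) ^ 2 = 8 * sig ^ 2 := by
    rw [mul_pow, mul_pow, sq_sqrt (by norm_num : (0:ℝ) ≤ 2)]; ring
  rw [h5] at h4
  calc gKer lam sig x z * t ^ 2
      = (t * rexp (-t ^ 2 / (2 * (2 * sig ^ 2)))) ^ 2 := by
        rw [gKer, mul_pow, ← ht]
        rw [pow_two (rexp _), h3]; ring
    _ ≤ 8 * sig ^ 2 := h4

lemma gKer_mul_exp_quarter (hs : 0 < sig) (x z : E) :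
    gKer lam sig x z * rexp (‖x - lam • z‖ ^ 2 / (4 * sig ^ 2))
      = rexp (-‖x - lam • z‖ ^ 2 / (4 * sig ^ 2)) := by
  rw [gKer, ← Real.exp_add]
  congr 1
  field_simp
  ring

/-- The main pointwise Jensen-type estimate. -/
lemma key_exp_bound (hs : 0 < sig) (x : E) :
    mFn lam sig μ x *
      rexp (sig ^ 2 * ‖(mFn lam sig μ x)⁻¹ • wFn lam sig μ x‖ ^ 2 / 4)
      ≤ ∫ z, rexp (-‖x - lam • z‖ ^ 2 / (4 * sig ^ 2)) ∂μ := by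
  classical
  set m := mFn lam sig μ x with hm
  have hm0 : 0 < m := mFn_pos hs x
  set A := ∫ z, gKer lam sig x z * ‖x - lam • z‖ ∂μ with hA
  have hgφ_cont : Continuous fun z : E => gKer lam sig x z * ‖x - lam • z‖ := by
    have := gKer_continuous (d := d) lam sig
    fun_prop
  have hA_int : Integrable (fun z : E => gKer lam sig x z * ‖x - lam • z‖) μ := by
    apply integrable_bdd hgφ_cont (2 * sig) _ μ
    intro z
    rw [Real.norm_eq_abs, abs_of_nonneg (mul_nonneg (gKer_pos lam sig x z).le (norm_nonneg _))]
    exact gKer_mul_norm_le hs x z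
  have hA0 : 0 ≤ A := integral_nonneg fun z => mul_nonneg (gKer_pos lam sig x z).le (norm_nonneg _)
  -- step 1: bound the gradient norm
  have hw : ‖wFn lam sig μ x‖ ≤ (sig ^ 2)⁻¹ * A := by
    calc ‖wFn lam sig μ x‖ ≤ ∫ z, ‖(-(sig ^ 2)⁻¹ * gKer lam sig x z) • (x - lam • z)‖ ∂μ :=
          norm_integral_le_integral_norm _
      _ = (sig ^ 2)⁻¹ * A := by
          rw [hA, ← integral_const_mul]
          congr 1; funext z
          rw [norm_smul, Real.norm_eq_abs, abs_mul, abs_neg, abs_inv,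
            abs_of_pos (by positivity : (0:ℝ) < sig ^ 2), abs_of_pos (gKer_pos lam sig x z)]
          ring
  have hgrad : ‖(m)⁻¹ • wFn lam sig μ x‖ ≤ A / (sig ^ 2 * m) := by
    rw [norm_smul, Real.norm_eq_abs, abs_inv, abs_of_pos hm0]
    rw [div_eq_mul_inv, mul_inv]
    calc m⁻¹ * ‖wFn lam sig μ x‖ ≤ m⁻¹ * ((sig ^ 2)⁻¹ * A) := by
          apply mul_le_mul_of_nonneg_left hw (by positivity)
      _ = A * ((sig ^ 2)⁻¹ * m⁻¹) := by ring
  have hexp1 : sig ^ 2 * ‖(m)⁻¹ • wFn lam sig μ x‖ ^ 2 / 4 ≤ (A / m) ^ 2 / (4 * sig ^ 2) := by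
    have h := sq_le_sq' (by linarith [norm_nonneg ((m)⁻¹ • wFn lam sig μ x)]) hgrad
    calc sig ^ 2 * ‖(m)⁻¹ • wFn lam sig μ x‖ ^ 2 / 4
        ≤ sig ^ 2 * (A / (sig ^ 2 * m)) ^ 2 / 4 := by
          apply div_le_div_of_nonneg_right _ (by norm_num)
          exact mul_le_mul_of_nonneg_left h (by positivity)
      _ = (A / m) ^ 2 / (4 * sig ^ 2) := by field_simp
  -- step 2: Jensen with the tilted probability measure
  set ρ := μ.withDensity fun z => ((Real.toNNReal (gKer lam sig x z / m) : ℝ≥0) : ℝ≥0∞) with hρ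
  have hmeas : Measurable fun z : E => Real.toNNReal (gKer lam sig x z / m) := by
    apply measurable_real_toNNReal.comp
    have := gKer_continuous (d := d) lam sig
    exact Continuous.measurable (by fun_prop)
  have hsmul_eq : ∀ (ψ : E → ℝ), (fun z => Real.toNNReal (gKer lam sig x z / m) • ψ z)
      = fun z => (gKer lam sig x z / m) * ψ z := by
    intro ψ; funext z
    rw [NNReal.smul_def, Real.coe_toNNReal _ (div_nonneg (gKer_pos lam sig x z).le hm0.le),
      smul_eq_mul]
  have hint_ρ : ∀ (ψ : E → ℝ), ∫ z, ψ z ∂ρ = ∫ z, (gKer lam sig x z / m) * ψ z ∂μ := by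
    intro ψ
    rw [hρ, integral_withDensity_eq_integral_smul hmeas, hsmul_eq]
  have hintable_ρ : ∀ (ψ : E → ℝ), Integrable (fun z => (gKer lam sig x z / m) * ψ z) μ →
      Integrable ψ ρ := by
    intro ψ h
    rw [hρ, integrable_withDensity_iff_integrable_smul hmeas, hsmul_eq]
    exact h
  have hprob : IsProbabilityMeasure ρ := by
    constructor
    rw [hρ, withDensity_apply _ MeasurableSet.univ, setLIntegral_univ]
    have : ∀ᵐ z ∂μ, (0:ℝ) ≤ gKer lam sig x z / m :=
      Filter.Eventually.of_forall fun z => div_nonneg (gKer_pos lam sig x z).le hm0.le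
    have hi : Integrable (fun z => gKer lam sig x z / m) μ :=
      (integrable_gKer hs x).div_const m
    rw [show (fun z => ((Real.toNNReal (gKer lam sig x z / m) : ℝ≥0) : ℝ≥0∞))
        = fun z => ENNReal.ofReal (gKer lam sig x z / m) from rfl]
    rw [← ofReal_integral_eq_lintegral_ofReal hi this]
    rw [integral_div, show (∫ (a : E), gKer lam sig x a ∂μ) = m from rfl,
      div_self (ne_of_gt hm0)]
    simp
  -- the three integrability facts over ρ
  have hφ_cont : Continuous fun z : E => ‖x - lam • z‖ := by fun_prop
  have hφ_int : Integrable (fun z : E => ‖x - lam • z‖) ρ := by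
    apply hintable_ρ
    have : (fun z : E => gKer lam sig x z / m * ‖x - lam • z‖)
        = fun z => m⁻¹ * (gKer lam sig x z * ‖x - lam • z‖) := by funext z; ring
    rw [this]
    exact (hA_int.const_mul _)
  have hφsq_int : Integrable (fun z : E => ‖x - lam • z‖ ^ 2) ρ := by
    apply hintable_ρ
    apply integrable_bdd (by have := gKer_continuous (d := d) lam sig; fun_prop)
      (m⁻¹ * (8 * sig ^ 2)) _ μ
    intro z
    rw [Real.norm_eq_abs, abs_of_nonneg (mul_nonneg (div_nonneg (gKer_pos lam sig x z).le hm0.le)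
      (by positivity))]
    rw [div_mul_eq_mul_div, div_eq_inv_mul]
    exact mul_le_mul_of_nonneg_left (gKer_mul_sq_norm_le hs x z) (by positivity)
  have hexpφ_int : Integrable (fun z : E => rexp (‖x - lam • z‖ ^ 2 / (4 * sig ^ 2))) ρ := by
    apply hintable_ρ
    apply integrable_bdd (by have := gKer_continuous (d := d) lam sig; fun_prop) (m⁻¹) _ μ
    intro z
    rw [Real.norm_eq_abs, abs_of_nonneg (mul_nonneg (div_nonneg (gKer_pos lam sig x z).le hm0.le)
      (exp_pos _).le)]
    rw [div_mul_eq_mul_div, gKer_mul_exp_quarter hs, div_eq_inv_mul]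
    calc m⁻¹ * rexp (-‖x - lam • z‖ ^ 2 / (4 * sig ^ 2)) ≤ m⁻¹ * 1 := by
          apply mul_le_mul_of_nonneg_left _ (by positivity)
          apply exp_le_one_iff.2
          apply div_nonpos_of_nonpos_of_nonneg <;> [simp [sq_nonneg]; positivity]
      _ = m⁻¹ := mul_one _
  -- compute ∫ φ dρ = A / m
  have hφρ : ∫ z, ‖x - lam • z‖ ∂ρ = A / m := by
    rw [hint_ρ, hA, div_eq_inv_mul, ← integral_const_mul]
    congr 1; funext z; ring
  -- Jensen 1 : square
  have hJ1 : (A / m) ^ 2 ≤ ∫ z, ‖x - lam • z‖ ^ 2 ∂ρ := by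
    rw [← hφρ]
    have := (Even.convexOn_pow (even_two) (𝕜 := ℝ)).map_integral_le (μ := ρ)
      ((continuous_pow 2).continuousOn) isClosed_univ
      (Filter.Eventually.of_forall fun z => Set.mem_univ _) hφ_int (by
        exact hφsq_int)
    simpa using this
  -- Jensen 2 : exp
  have hJ2 : rexp (∫ z, ‖x - lam • z‖ ^ 2 / (4 * sig ^ 2) ∂ρ)
      ≤ ∫ z, rexp (‖x - lam • z‖ ^ 2 / (4 * sig ^ 2)) ∂ρ := by
    have := convexOn_exp.map_integral_le (μ := ρ)
      (continuous_exp.continuousOn) isClosed_univ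
      (Filter.Eventually.of_forall fun z => Set.mem_univ _) (hφsq_int.div_const _) (by
        exact hexpφ_int)
    simpa using this
  -- combine
  have hfinal : rexp ((A / m) ^ 2 / (4 * sig ^ 2))
      ≤ ∫ z, rexp (‖x - lam • z‖ ^ 2 / (4 * sig ^ 2)) ∂ρ := by
    refine le_trans ?_ hJ2
    apply exp_le_exp.2
    rw [integral_div]
    exact div_le_div_of_nonneg_right hJ1 (by positivity)
  have hrhs : ∫ z, rexp (‖x - lam • z‖ ^ 2 / (4 * sig ^ 2)) ∂ρ
      = m⁻¹ * ∫ z, rexp (-‖x - lam • z‖ ^ 2 / (4 * sig ^ 2)) ∂μ := by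
    rw [hint_ρ, ← integral_const_mul]
    congr 1; funext z
    rw [div_mul_eq_mul_div, gKer_mul_exp_quarter hs, div_eq_inv_mul]
  calc m * rexp (sig ^ 2 * ‖(m)⁻¹ • wFn lam sig μ x‖ ^ 2 / 4)
      ≤ m * rexp ((A / m) ^ 2 / (4 * sig ^ 2)) := by
        exact mul_le_mul_of_nonneg_left (exp_le_exp.2 hexp1) hm0.le
    _ ≤ m * (m⁻¹ * ∫ z, rexp (-‖x - lam • z‖ ^ 2 / (4 * sig ^ 2)) ∂μ) := by
        rw [← hrhs]
        exact mul_le_mul_of_nonneg_left hfinal hm0.le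
    _ = ∫ z, rexp (-‖x - lam • z‖ ^ 2 / (4 * sig ^ 2)) ∂μ := by
        field_simp


lemma integrable_gauss_quarter (hs : 0 < sig) (v : E) :
    Integrable (fun x : EuclideanSpace ℝ (Fin d) =>
      rexp (-‖x - v‖ ^ 2 / (4 * sig ^ 2))) volume := by
  have hb : (0:ℝ) < (((4 * sig ^ 2)⁻¹ : ℝ) : ℂ).re := by
    rw [Complex.ofReal_re]; positivity
  have h := (GaussianFourier.integrable_cexp_neg_mul_sq_norm_add
      (V := EuclideanSpace ℝ (Fin d)) hb 0 0).norm
  have h2 : Integrable (fun x : EuclideanSpace ℝ (Fin d) =>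
      rexp (-‖x‖ ^ 2 / (4 * sig ^ 2))) volume := by
    apply h.congr
    refine Filter.Eventually.of_forall (fun y => ?_)
    simp only [Complex.norm_exp, zero_mul, add_zero]
    congr 1
    rw [show (-(((4 * sig ^ 2)⁻¹ : ℝ) : ℂ) * (‖y‖:ℂ) ^ 2)
        = ((-‖y‖ ^ 2 / (4 * sig ^ 2) : ℝ) : ℂ) by push_cast; ring]
    rw [Complex.ofReal_re]
  exact h2.comp_sub_right v

lemma integral_gauss_quarter (hs : 0 < sig) (v : E) :
    ∫ x : EuclideanSpace ℝ (Fin d), rexp (-‖x - v‖ ^ 2 / (4 * sig ^ 2))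
      = (4 * π * sig ^ 2) ^ ((d : ℝ) / 2) := by
  rw [integral_sub_right_eq_self (fun x : EuclideanSpace ℝ (Fin d) =>
    rexp (-‖x‖ ^ 2 / (4 * sig ^ 2))) v]
  have hb : (0:ℝ) < (4 * sig ^ 2)⁻¹ := by positivity
  have h := GaussianFourier.integral_rexp_neg_mul_sq_norm (V := EuclideanSpace ℝ (Fin d)) hb
  rw [show (fun x : EuclideanSpace ℝ (Fin d) => rexp (-‖x‖ ^ 2 / (4 * sig ^ 2)))
      = fun x : EuclideanSpace ℝ (Fin d) => rexp (-(4 * sig ^ 2)⁻¹ * ‖x‖ ^ 2) by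
    funext y; congr 1; field_simp]
  rw [h, finrank_euclideanSpace_fin]
  congr 1
  rw [div_eq_mul_inv, inv_inv]
  ring

lemma const_calc (hs : 0 < sig) :
    (2 * π * sig ^ 2) ^ (-(d : ℝ) / 2) * (4 * π * sig ^ 2) ^ ((d : ℝ) / 2)
      = 2 ^ ((d : ℝ) / 2) := by
  have h1 : (0:ℝ) < 2 * π * sig ^ 2 := by positivity
  have h2 : (0:ℝ) < 4 * π * sig ^ 2 := by positivity
  rw [neg_div, Real.rpow_neg h1.le, inv_mul_eq_div, ← Real.div_rpow h2.le h1.le]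
  congr 1
  field_simp
  ring

lemma two_rpow_le (d : ℕ) : (2:ℝ) ^ ((d : ℝ) / 2) ≤ rexp d := by
  rw [Real.rpow_def_of_pos (by norm_num : (0:ℝ) < 2)]
  apply Real.exp_le_exp.2
  have hl : Real.log 2 ≤ 1 := by
    have := Real.log_two_lt_d9
    linarith
  have hd : (0:ℝ) ≤ (d:ℝ) := Nat.cast_nonneg d
  nlinarith


/-- the global exponential moment bound, in `ℝ≥0∞` form -/
lemma lintegral_exp_moment (hs : 0 < sig) :
    ∫⁻ x, ENNReal.ofReal (smoothedDensity d lam sig μ x *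
        rexp (sig ^ 2 * ‖(mFn lam sig μ x)⁻¹ • wFn lam sig μ x‖ ^ 2 / 4))
      ≤ ENNReal.ofReal ((2:ℝ) ^ ((d : ℝ) / 2)) := by
  set c := (2 * π * sig ^ 2) ^ (-(d : ℝ) / 2) with hc
  have hc0 : 0 < c := normConst_pos hs
  have step1 : ∀ x : E, smoothedDensity d lam sig μ x *
        rexp (sig ^ 2 * ‖(mFn lam sig μ x)⁻¹ • wFn lam sig μ x‖ ^ 2 / 4)
      ≤ ∫ z, c * rexp (-‖x - lam • z‖ ^ 2 / (4 * sig ^ 2)) ∂μ := by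
    intro x
    rw [smoothedDensity_eq, mul_assoc, integral_const_mul]
    exact mul_le_mul_of_nonneg_left (key_exp_bound hs x) hc0.le
  have hint : ∀ x : E, Integrable (fun z : E =>
      c * rexp (-‖x - lam • z‖ ^ 2 / (4 * sig ^ 2))) μ := by
    intro x
    apply integrable_bdd _ c _ μ
    · have := gKer_continuous (d := d) lam sig
      fun_prop
    · intro z
      rw [Real.norm_eq_abs, abs_of_nonneg (by positivity)]
      calc c * rexp (-‖x - lam • z‖ ^ 2 / (4 * sig ^ 2)) ≤ c * 1 := by
            apply mul_le_mul_of_nonneg_left _ hc0.le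
            apply exp_le_one_iff.2
            apply div_nonpos_of_nonpos_of_nonneg <;> [simp [sq_nonneg]; positivity]
        _ = c := mul_one _
  calc ∫⁻ x, ENNReal.ofReal (smoothedDensity d lam sig μ x *
        rexp (sig ^ 2 * ‖(mFn lam sig μ x)⁻¹ • wFn lam sig μ x‖ ^ 2 / 4))
      ≤ ∫⁻ x, ENNReal.ofReal (∫ z, c * rexp (-‖x - lam • z‖ ^ 2 / (4 * sig ^ 2)) ∂μ) := by
        exact lintegral_mono fun x => ENNReal.ofReal_le_ofReal (step1 x)
    _ = ∫⁻ x, ∫⁻ z, ENNReal.ofReal (c * rexp (-‖x - lam • z‖ ^ 2 / (4 * sig ^ 2))) ∂μ := by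
        congr 1; funext x
        rw [← ofReal_integral_eq_lintegral_ofReal (hint x)
          (Filter.Eventually.of_forall fun z => by positivity)]
    _ = ∫⁻ z, ∫⁻ x, ENNReal.ofReal (c * rexp (-‖x - lam • z‖ ^ 2 / (4 * sig ^ 2))) ∂volume ∂μ := by
        apply lintegral_lintegral_swap
        apply Measurable.aemeasurable
        apply ENNReal.measurable_ofReal.comp
        apply Continuous.measurable
        fun_prop
    _ = ∫⁻ _z, ENNReal.ofReal ((2:ℝ) ^ ((d : ℝ) / 2)) ∂μ := by
        congr 1; funext z
        rw [show (fun x : E => ENNReal.ofReal (c * rexp (-‖x - lam • z‖ ^ 2 / (4 * sig ^ 2))))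
            = fun x : E => ENNReal.ofReal ((fun x => c * rexp (-‖x - lam • z‖ ^ 2 /
                (4 * sig ^ 2))) x) from rfl]
        rw [← ofReal_integral_eq_lintegral_ofReal
          ((integrable_gauss_quarter hs (lam • z)).const_mul c)
          (Filter.Eventually.of_forall fun x => by positivity)]
        rw [integral_const_mul, integral_gauss_quarter hs (lam • z), hc, const_calc hs]
    _ = ENNReal.ofReal ((2:ℝ) ^ ((d : ℝ) / 2)) := by
        rw [lintegral_const, measure_univ, mul_one]

theorem stmt7 : ∃ C : ℝ, 0 < C ∧
    ∀ (d : ℕ) (μ : Measure (EuclideanSpace ℝ (Fin d))), IsProbabilityMeasure μ →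
    ∀ lam sig : ℝ, lam ∈ Set.Ioc (0 : ℝ) 1 → 0 < sig →
    ∀ ε : ℝ, 0 < ε → ε < 1 →
      (volume.withDensity fun x => ENNReal.ofReal (smoothedDensity d lam sig μ x))
        {x | C * Real.sqrt ((d : ℝ) + Real.log (1 / ε)) / sig <
          ‖gradient (fun x => Real.log (smoothedDensity d lam sig μ x)) x‖}
      ≤ ENNReal.ofReal ε := by
  refine ⟨2, two_pos, ?_⟩
  intro d μ hμ lam sig hlam hs ε hε0 hε1
  haveI := hμ
  set L := Real.log (1 / ε) with hLdef
  have hL0 : 0 ≤ L := Real.log_nonneg (by rw [le_div_iff₀ hε0]; linarith)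
  have hdL0 : (0:ℝ) ≤ (d:ℝ) + L := by positivity
  set t := 2 * Real.sqrt ((d : ℝ) + L) / sig with htdef
  have ht0 : 0 ≤ t := by positivity
  have ht2 : sig ^ 2 * t ^ 2 / 4 = (d : ℝ) + L := by
    rw [htdef, div_pow, mul_pow, Real.sq_sqrt hdL0]
    field_simp
    ring
  set h : EuclideanSpace ℝ (Fin d) → ℝ :=
    fun x => ‖(mFn lam sig μ x)⁻¹ • wFn lam sig μ x‖ with hhdef
  have hset : {x | t < ‖gradient (fun x => Real.log (smoothedDensity d lam sig μ x)) x‖}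
      = {x | t < h x} := by
    ext x
    rw [Set.mem_setOf_eq, Set.mem_setOf_eq, gradient_log_smoothed hs, hhdef]
  have hcont : Continuous h := by
    rw [hhdef]
    apply Continuous.norm
    exact Continuous.smul (((mFn_continuous hs).inv₀ fun x => (mFn_pos hs x).ne'))
      (wFn_continuous hs)
  have hSmeas : MeasurableSet {x : EuclideanSpace ℝ (Fin d) | t < h x} :=
    (isOpen_lt continuous_const hcont).measurableSet
  rw [hset, withDensity_apply _ hSmeas]
  have hptwise : ∀ x ∈ {x : EuclideanSpace ℝ (Fin d) | t < h x},
      ENNReal.ofReal (smoothedDensity d lam sig μ x)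
        ≤ ENNReal.ofReal (rexp (-((d:ℝ) + L))) *
          ENNReal.ofReal (smoothedDensity d lam sig μ x * rexp (sig ^ 2 * h x ^ 2 / 4)) := by
    intro x hx
    rw [← ENNReal.ofReal_mul (exp_pos _).le]
    apply ENNReal.ofReal_le_ofReal
    have hfx : 0 < smoothedDensity d lam sig μ x := by
      rw [smoothedDensity_eq]
      exact mul_pos (normConst_pos hs) (mFn_pos hs x)
    have hhx : t < h x := hx
    have hh2 : (d:ℝ) + L ≤ sig ^ 2 * h x ^ 2 / 4 := by
      rw [← ht2]
      have : t ^ 2 ≤ h x ^ 2 := by nlinarith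
      have h4 : sig ^ 2 * t ^ 2 ≤ sig ^ 2 * h x ^ 2 :=
        mul_le_mul_of_nonneg_left this (by positivity)
      linarith
    calc smoothedDensity d lam sig μ x
        = rexp (-(sig ^ 2 * h x ^ 2 / 4)) *
            (smoothedDensity d lam sig μ x * rexp (sig ^ 2 * h x ^ 2 / 4)) := by
          rw [← mul_assoc, mul_comm (rexp _) (smoothedDensity d lam sig μ x), mul_assoc,
            ← Real.exp_add, neg_add_cancel, Real.exp_zero, mul_one]
      _ ≤ rexp (-((d:ℝ) + L)) *
            (smoothedDensity d lam sig μ x * rexp (sig ^ 2 * h x ^ 2 / 4)) := by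
          apply mul_le_mul_of_nonneg_right _ (by positivity)
          exact exp_le_exp.2 (by linarith)
  calc ∫⁻ x in {x | t < h x}, ENNReal.ofReal (smoothedDensity d lam sig μ x)
      ≤ ∫⁻ x in {x | t < h x}, ENNReal.ofReal (rexp (-((d:ℝ) + L))) *
          ENNReal.ofReal (smoothedDensity d lam sig μ x * rexp (sig ^ 2 * h x ^ 2 / 4)) := by
        apply setLIntegral_mono_ae
        · apply AEMeasurable.const_mul
          apply Measurable.aemeasurable
          apply ENNReal.measurable_ofReal.comp
          apply Continuous.measurable
          have h1 : Continuous (smoothedDensity d lam sig μ) := by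
            have hm : Continuous (mFn lam sig μ) := mFn_continuous hs
            rw [show smoothedDensity d lam sig μ
                = fun x => (2 * π * sig ^ 2) ^ (-(d : ℝ) / 2) * mFn lam sig μ x from
              funext fun x => smoothedDensity_eq x]
            fun_prop
          fun_prop
        · exact Filter.Eventually.of_forall hptwise
    _ = ENNReal.ofReal (rexp (-((d:ℝ) + L))) * ∫⁻ x in {x | t < h x},
          ENNReal.ofReal (smoothedDensity d lam sig μ x * rexp (sig ^ 2 * h x ^ 2 / 4)) := by
        rw [lintegral_const_mul' _ _ ENNReal.ofReal_ne_top]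
    _ ≤ ENNReal.ofReal (rexp (-((d:ℝ) + L))) * ENNReal.ofReal ((2:ℝ) ^ ((d : ℝ) / 2)) := by
        apply mul_le_mul_right
        exact le_trans (setLIntegral_le_lintegral _ _) (lintegral_exp_moment hs)
    _ ≤ ENNReal.ofReal ε := by
        rw [← ENNReal.ofReal_mul (exp_pos _).le]
        apply ENNReal.ofReal_le_ofReal
        calc rexp (-((d:ℝ) + L)) * (2:ℝ) ^ ((d : ℝ) / 2)
            ≤ rexp (-((d:ℝ) + L)) * rexp d := by
              exact mul_le_mul_of_nonneg_left (two_rpow_le d) (exp_pos _).le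
          _ = rexp (-L) := by rw [← Real.exp_add]; ring_nf
          _ = ε := by
              rw [hLdef, Real.log_div one_ne_zero (ne_of_gt hε0), Real.log_one]
              rw [show -(0 - Real.log ε) = Real.log ε by ring, Real.exp_log hε0]

end
end

section
/- Let (𝒳, 𝒜, μ) be a probability space, 𝒴 a finite label set, and p, q conditional label probabilities on 𝒴 with q(y'|x) > 0 for all x, y'. Suppose the expected conditional KL divergence satisfies ∫ Σ_{y'∈𝒴} p(y'|x) log(p(y'|x)/q(y'|x)) dμ(x) ≤ ε². Fix a label y with P(y) = ∫ p(y|x) dμ(x) > 0, and set Q(y) = ∫ q(y|x) dμ(x). Then the posterior KL divergence satisfies ∫ (p(y|x)/P(y)) · log( (p(y|x)/P(y)) / (q(y|x)/Q(y)) ) dμ(x) ≤ ε² / P(y). -/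
open MeasureTheory

lemma gibbs_pt {a b c : ℝ} (ha : 0 ≤ a) (hb : 0 < b) (hc : 0 < c) :
    a * Real.log c + (a - b * c) ≤ a * Real.log (a / b) := by
  rcases ha.eq_or_lt with h | h
  · rw [← h]; simp; nlinarith
  · have h1 : Real.log (b * c / a) ≤ b * c / a - 1 :=
      Real.log_le_sub_one_of_pos (by positivity)
    have h3 : a * Real.log (b * c / a) ≤ a * (b * c / a - 1) :=
      mul_le_mul_of_nonneg_left h1 h.le
    have h4 : a * (b * c / a - 1) = b * c - a := by field_simp
    have h5 : Real.log (b * c / a) = Real.log b + Real.log c - Real.log a := by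
      rw [Real.log_div (by positivity) h.ne', Real.log_mul hb.ne' hc.ne']
    have h6 : Real.log (a / b) = Real.log a - Real.log b := Real.log_div h.ne' hb.ne'
    rw [h6]; nlinarith

theorem stmt10 {𝒳 : Type*} [MeasurableSpace 𝒳] (μ : Measure 𝒳) [IsProbabilityMeasure μ]
    (𝒴 : Type*) [Fintype 𝒴]
    (p q : 𝒳 → 𝒴 → ℝ)
    (hp_meas : ∀ y', Measurable fun x => p x y')
    (hq_meas : ∀ y', Measurable fun x => q x y')
    (hp0 : ∀ x y', 0 ≤ p x y') (hpsum : ∀ x, ∑ y', p x y' = 1)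
    (hq0 : ∀ x y', 0 < q x y') (hqsum : ∀ x, ∑ y', q x y' = 1)
    (ε : ℝ)
    (hint : Integrable (fun x => ∑ y', p x y' * Real.log (p x y' / q x y')) μ)
    (hKL : ∫ x, ∑ y', p x y' * Real.log (p x y' / q x y') ∂μ ≤ ε ^ 2)
    (y : 𝒴) (hPy : 0 < ∫ x, p x y ∂μ) :
    ∫ x, (p x y / ∫ x', p x' y ∂μ) *
        Real.log ((p x y / ∫ x', p x' y ∂μ) / (q x y / ∫ x', q x' y ∂μ)) ∂μ
      ≤ ε ^ 2 / ∫ x, p x y ∂μ := by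
  classical
  have hq1 : ∀ x y', q x y' ≤ 1 := fun x y' => by
    have h := Finset.single_le_sum (f := fun z => q x z) (fun z _ => (hq0 x z).le)
      (Finset.mem_univ y')
    simpa [hqsum x] using h
  have hpInt : ∀ y', Integrable (fun x => p x y') μ := fun y' => by
    refine (integrable_const (1:ℝ)).mono' (hp_meas y').aestronglyMeasurable
      (Filter.Eventually.of_forall fun x => ?_)
    rw [Real.norm_eq_abs, abs_of_nonneg (hp0 x y')]
    have h := Finset.single_le_sum (f := fun z => p x z) (fun z _ => hp0 x z)
      (Finset.mem_univ y')
    simpa [hpsum x] using h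
  have hqInt : ∀ y', Integrable (fun x => q x y') μ := fun y' => by
    refine (integrable_const (1:ℝ)).mono' (hq_meas y').aestronglyMeasurable
      (Filter.Eventually.of_forall fun x => ?_)
    rw [Real.norm_eq_abs, abs_of_nonneg (hq0 x y').le]
    exact hq1 x y'
  set T : 𝒴 → 𝒳 → ℝ := fun y' x => p x y' * Real.log (p x y' / q x y') with hTdef
  have hTmeas : ∀ y', Measurable (T y') := fun y' =>
    (hp_meas y').mul (Real.measurable_log.comp ((hp_meas y').div (hq_meas y')))
  have hTlb : ∀ y' x, p x y' - q x y' ≤ T y' x := fun y' x => by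
    have h := gibbs_pt (hp0 x y') (hq0 x y') one_pos
    simpa [hTdef] using h
  have hTub : ∀ y' x, T y' x ≤ (∑ z, T z x) + 1 := fun y' x => by
    have h2 : ∑ z ∈ Finset.univ.erase y', (p x z - q x z) ≤ ∑ z ∈ Finset.univ.erase y', T z x :=
      Finset.sum_le_sum fun z _ => hTlb z x
    have h3 : ∑ z, T z x = T y' x + ∑ z ∈ Finset.univ.erase y', T z x :=
      (Finset.add_sum_erase _ _ (Finset.mem_univ y')).symm
    have h4 : ∑ z ∈ Finset.univ.erase y', (p x z - q x z)
        = (1 - p x y') - (1 - q x y') := by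
      rw [Finset.sum_sub_distrib, Finset.sum_erase_eq_sub (Finset.mem_univ y'),
        Finset.sum_erase_eq_sub (Finset.mem_univ y'), hpsum x, hqsum x]
    have h5 := hq1 x y'
    have h6 := hp0 x y'
    have h7 := hq0 x y'
    have h8 := Finset.single_le_sum (f := fun z => p x z) (fun z _ => hp0 x z)
      (Finset.mem_univ y')
    rw [hpsum x] at h8
    linarith
  have hintT : Integrable (fun x => ∑ z, T z x) μ := hint
  have hTInt : ∀ y', Integrable (T y') μ := fun y' => by
    refine (hintT.abs.add (integrable_const 1)).mono' (hTmeas y').aestronglyMeasurable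
      (Filter.Eventually.of_forall fun x => ?_)
    rw [Real.norm_eq_abs, abs_le]
    simp only [Pi.add_apply]
    constructor
    · have h1 := hTlb y' x
      have h2 := hp0 x y'
      have h3 := hq1 x y'
      have h4 : (0:ℝ) ≤ |∑ z, T z x| := abs_nonneg _
      have h5 := hq0 x y'
      linarith
    · have h1 := hTub y' x
      have h2 := le_abs_self (∑ z, T z x)
      linarith
  set Pm : 𝒴 → ℝ := fun y' => ∫ x, p x y' ∂μ with hPmdef
  set Qm : 𝒴 → ℝ := fun y' => ∫ x, q x y' ∂μ with hQmdef
  have hPnn : ∀ y', 0 ≤ Pm y' := fun y' => integral_nonneg fun x => hp0 x y'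
  have hQpos : ∀ y', 0 < Qm y' := fun y' => by
    rw [hQmdef]
    refine (integral_pos_iff_support_of_nonneg (fun x => (hq0 x y').le) (hqInt y')).2 ?_
    have : Function.support (fun x => q x y') = Set.univ :=
      Set.eq_univ_of_forall fun x => (hq0 x y').ne'
    rw [this]; simp
  have hsumP : ∑ y', Pm y' = 1 := by
    rw [hPmdef, ← integral_finset_sum _ fun y' _ => hpInt y']
    simp only [hpsum]
    simp
  have hsumQ : ∑ y', Qm y' = 1 := by
    rw [hQmdef, ← integral_finset_sum _ fun y' _ => hqInt y']
    simp only [hqsum]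
    simp
  -- log-sum inequality for each label
  have hls : ∀ y', Pm y' * Real.log (Pm y' / Qm y') ≤ ∫ x, T y' x ∂μ := by
    intro y'
    rcases (hPnn y').eq_or_lt with h | h
    · have hz : (fun x => p x y') =ᵐ[μ] 0 :=
        (integral_eq_zero_iff_of_nonneg (fun x => hp0 x y') (hpInt y')).1 h.symm
      have hz2 : T y' =ᵐ[μ] 0 := hz.mono fun x hx => by
        simp only [hTdef]
        simp only [Pi.zero_apply] at hx ⊢
        rw [hx]; ring
      rw [integral_congr_ae hz2, ← h]
      simp only [Pi.zero_apply, integral_zero, zero_mul, le_refl]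
    · have hQ := hQpos y'
      have hc : 0 < Pm y' / Qm y' := by positivity
      have key : ∀ x, p x y' * Real.log (Pm y' / Qm y')
          + (p x y' - q x y' * (Pm y' / Qm y')) ≤ T y' x :=
        fun x => gibbs_pt (hp0 x y') (hq0 x y') hc
      have hqc : Integrable (fun x => q x y' * (Pm y' / Qm y')) μ := (hqInt y').mul_const _
      have hsub : Integrable (fun x => p x y' - q x y' * (Pm y' / Qm y')) μ := by
        exact (hpInt y').sub hqc
      have hpc : Integrable (fun x => p x y' * Real.log (Pm y' / Qm y')) μ :=
        (hpInt y').mul_const _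
      have hint2 : Integrable (fun x => p x y' * Real.log (Pm y' / Qm y')
          + (p x y' - q x y' * (Pm y' / Qm y'))) μ := by
        exact hpc.add hsub
      have hmono := integral_mono hint2 (hTInt y') key
      have hcomp : ∫ x, (p x y' * Real.log (Pm y' / Qm y')
          + (p x y' - q x y' * (Pm y' / Qm y'))) ∂μ
          = Pm y' * Real.log (Pm y' / Qm y') + (Pm y' - Qm y' * (Pm y' / Qm y')) := by
        rw [integral_add hpc hsub, integral_sub (hpInt y') hqc, integral_mul_const,
          integral_mul_const]
      have hcancel : Qm y' * (Pm y' / Qm y') = Pm y' := by field_simp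
      rw [hcomp, hcancel] at hmono
      linarith
  -- discrete Gibbs inequality
  have hdg : 0 ≤ ∑ y', Pm y' * Real.log (Pm y' / Qm y') := by
    have h1 : ∀ y', Pm y' - Qm y' ≤ Pm y' * Real.log (Pm y' / Qm y') := fun y' => by
      have h := gibbs_pt (hPnn y') (hQpos y') one_pos
      simpa using h
    have h2 : ∑ y', (Pm y' - Qm y') ≤ ∑ y', Pm y' * Real.log (Pm y' / Qm y') :=
      Finset.sum_le_sum fun y' _ => h1 y'
    rw [Finset.sum_sub_distrib, hsumP, hsumQ] at h2
    linarith
  have hD : ∑ y', ∫ x, T y' x ∂μ ≤ ε ^ 2 := by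
    rw [← integral_finset_sum _ fun y' _ => hTInt y']
    exact hKL
  have hTy : ∫ x, T y x ∂μ ≤ ε ^ 2 + Pm y * Real.log (Pm y / Qm y) := by
    have h1 : ∑ z ∈ Finset.univ.erase y, Pm z * Real.log (Pm z / Qm z)
        ≤ ∑ z ∈ Finset.univ.erase y, ∫ x, T z x ∂μ :=
      Finset.sum_le_sum fun z _ => hls z
    have h2 : (∫ x, T y x ∂μ) + ∑ z ∈ Finset.univ.erase y, ∫ x, T z x ∂μ
        = ∑ z, ∫ x, T z x ∂μ :=
      Finset.add_sum_erase _ (fun z => ∫ x, T z x ∂μ) (Finset.mem_univ y)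
    have h3 : Pm y * Real.log (Pm y / Qm y)
        + ∑ z ∈ Finset.univ.erase y, Pm z * Real.log (Pm z / Qm z)
        = ∑ z, Pm z * Real.log (Pm z / Qm z) :=
      Finset.add_sum_erase _ (fun z => Pm z * Real.log (Pm z / Qm z)) (Finset.mem_univ y)
    linarith
  -- final computation
  have hPy' : 0 < Pm y := hPy
  have hQy := hQpos y
  have hPmy : Pm y = ∫ x', p x' y ∂μ := rfl
  have hQmy : Qm y = ∫ x', q x' y ∂μ := rfl
  rw [← hPmy, ← hQmy]
  have hpt : ∀ x, (p x y / Pm y) * Real.log ((p x y / Pm y) / (q x y / Qm y))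
      = (1 / Pm y) * T y x + p x y * (Real.log (Qm y / Pm y) / Pm y) := by
    intro x
    rcases (hp0 x y).eq_or_lt with h | h
    · simp only [hTdef]
      rw [← h]
      simp
    · have hq := hq0 x y
      have hrw : (p x y / Pm y) / (q x y / Qm y) = (p x y / q x y) * (Qm y / Pm y) := by
        field_simp
      rw [hrw, Real.log_mul (by positivity : (0:ℝ) < p x y / q x y).ne'
        (by positivity : (0:ℝ) < Qm y / Pm y).ne']
      simp only [hTdef]
      field_simp
      try ring
  have hIeq : ∫ x, (p x y / Pm y) * Real.log ((p x y / Pm y) / (q x y / Qm y)) ∂μ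
      = (1 / Pm y) * (∫ x, T y x ∂μ) + Pm y * (Real.log (Qm y / Pm y) / Pm y) := by
    rw [integral_congr_ae (Filter.Eventually.of_forall hpt),
      integral_add ((hTInt y).const_mul _) ((hpInt y).mul_const _),
      integral_const_mul, integral_mul_const]
  rw [hIeq]
  have hlogs : Real.log (Pm y / Qm y) + Real.log (Qm y / Pm y) = 0 := by
    rw [Real.log_div hPy'.ne' hQy.ne', Real.log_div hQy.ne' hPy'.ne']; ring
  have hc1 : Pm y * (Real.log (Qm y / Pm y) / Pm y) = Real.log (Qm y / Pm y) := by
    field_simp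
  have hc2 : (1 / Pm y) * (ε ^ 2 + Pm y * Real.log (Pm y / Qm y))
      = ε ^ 2 / Pm y + Real.log (Pm y / Qm y) := by
    field_simp
  have hc3 : (1 / Pm y) * (∫ x, T y x ∂μ) ≤ (1 / Pm y) * (ε ^ 2 + Pm y * Real.log (Pm y / Qm y)) :=
    mul_le_mul_of_nonneg_left hTy (by positivity)
  rw [hc1]
  rw [hc2] at hc3
  linarith
end

section
/- Let (𝒳, 𝒜, μ) be a probability space, 𝒴 a finite label set, and p, q conditional label probabilities on 𝒴 with p(y'|x) > 0 and q(y'|x) > 0 for all x, y'. Suppose the expected conditional KL divergence satisfies ∫ Σ_{y'∈𝒴} p(y'|x) log(p(y'|x)/q(y'|x)) dμ(x) ≤ ε² for some ε ≥ 0. Fix a label y with P(y) = ∫ p(y|x) dμ(x) > 0. Then ∫ (p(y|x)/P(y)) · | log p(y|x) − log q(y|x) | dμ(x) ≤ ε²/P(y) + 2.2 ε / P(y)^{3/2}. -/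
open MeasureTheory

private lemma core_log (a b : ℝ) (ha : 0 < a) (hb : 0 < b) :
    a * Real.log (b / a) ≤ 2 * Real.sqrt a * (Real.sqrt b - Real.sqrt a) := by
  have hsa := Real.sqrt_pos.mpr ha
  have hsb := Real.sqrt_pos.mpr hb
  have h1 : Real.log (b / a) = 2 * Real.log (Real.sqrt b / Real.sqrt a) := by
    rw [Real.log_div hb.ne' ha.ne', Real.log_div hsb.ne' hsa.ne',
      Real.log_sqrt hb.le, Real.log_sqrt ha.le]; ring
  have h2 : Real.log (Real.sqrt b / Real.sqrt a) ≤ Real.sqrt b / Real.sqrt a - 1 :=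
    Real.log_le_sub_one_of_pos (div_pos hsb hsa)
  have h3 : a * (Real.sqrt b / Real.sqrt a) = Real.sqrt a * Real.sqrt b := by
    rw [mul_div_assoc']; rw [mul_comm]; rw [mul_div_assoc, Real.div_sqrt]; ring
  calc a * Real.log (b / a) = 2 * a * Real.log (Real.sqrt b / Real.sqrt a) := by rw [h1]; ring
    _ ≤ 2 * a * (Real.sqrt b / Real.sqrt a - 1) := by
        have := mul_le_mul_of_nonneg_left h2 (by positivity : (0:ℝ) ≤ 2 * a); linarith
    _ = 2 * Real.sqrt a * (Real.sqrt b - Real.sqrt a) := by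
        have h4 := Real.sq_sqrt ha.le
        nlinarith [h3]

private lemma term_ineq (a b : ℝ) (ha : 0 < a) (hb : 0 < b) :
    (Real.sqrt a - Real.sqrt b) ^ 2 + (a - b) ≤ a * Real.log (a / b) := by
  have h := core_log a b ha hb
  have h1 : Real.log (b / a) = - Real.log (a / b) := by
    rw [Real.log_div hb.ne' ha.ne', Real.log_div ha.ne' hb.ne']; ring
  have h2 := Real.sq_sqrt ha.le
  have h3 := Real.sq_sqrt hb.le
  nlinarith [h]

private lemma pointwise_ineq (a b K t : ℝ) (ha : 0 < a) (hb : 0 < b) (ht : 0 < t)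
    (hK1 : a * Real.log (a / b) - (a - b) ≤ K)
    (hK0 : 0 ≤ K) :
    a * |Real.log a - Real.log b| ≤ K + t * a + (Real.sqrt a - Real.sqrt b) ^ 2 / t := by
  have hcore := core_log a b ha hb
  have hsa := Real.sqrt_pos.mpr ha
  have hsb := Real.sqrt_pos.mpr hb
  have h2 := Real.sq_sqrt ha.le
  have h3 := Real.sq_sqrt hb.le
  have hld : Real.log (a / b) = Real.log a - Real.log b := Real.log_div ha.ne' hb.ne'
  have hld' : Real.log (b / a) = Real.log b - Real.log a := Real.log_div hb.ne' ha.ne'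
  have hexp : t * (t * a + (Real.sqrt a - Real.sqrt b) ^ 2 / t) =
      t * t * a + (Real.sqrt a - Real.sqrt b) ^ 2 := by field_simp
  rcases le_or_gt (Real.log b) (Real.log a) with h | h
  · rw [abs_of_nonneg (by linarith)]
    have hab : b ≤ a := by
      by_contra hc; push_neg at hc
      exact absurd h (not_le.mpr (Real.log_lt_log ha hc))
    have hsab : Real.sqrt b ≤ Real.sqrt a := Real.sqrt_le_sqrt hab
    have key : a - b ≤ t * a + (Real.sqrt a - Real.sqrt b) ^ 2 / t := by
      have hmul : t * (a - b) ≤ t * (t * a + (Real.sqrt a - Real.sqrt b) ^ 2 / t) := by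
        rw [hexp]
        nlinarith [sq_nonneg (t * Real.sqrt a - (Real.sqrt a - Real.sqrt b)),
          mul_nonneg ht.le (sq_nonneg (Real.sqrt a - Real.sqrt b))]
      exact le_of_mul_le_mul_left hmul ht
    nlinarith [hK1, hld]
  · rw [abs_of_neg (by linarith)]
    have key : 2 * Real.sqrt a * (Real.sqrt b - Real.sqrt a) ≤
        t * a + (Real.sqrt a - Real.sqrt b) ^ 2 / t := by
      have hmul : t * (2 * Real.sqrt a * (Real.sqrt b - Real.sqrt a)) ≤
          t * (t * a + (Real.sqrt a - Real.sqrt b) ^ 2 / t) := by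
        rw [hexp]
        nlinarith [sq_nonneg (t * Real.sqrt a - (Real.sqrt b - Real.sqrt a))]
      exact le_of_mul_le_mul_left hmul ht
    nlinarith [hcore, hld']

theorem stmt12 {𝒳 : Type*} [MeasurableSpace 𝒳] (μ : Measure 𝒳) [IsProbabilityMeasure μ]
    (𝒴 : Type*) [Fintype 𝒴]
    (p q : 𝒳 → 𝒴 → ℝ)
    (hp_meas : ∀ y', Measurable fun x => p x y')
    (hq_meas : ∀ y', Measurable fun x => q x y')
    (hp0 : ∀ x y', 0 < p x y') (hpsum : ∀ x, ∑ y', p x y' = 1)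
    (hq0 : ∀ x y', 0 < q x y') (hqsum : ∀ x, ∑ y', q x y' = 1)
    (ε : ℝ) (hε : 0 ≤ ε)
    (hint : Integrable (fun x => ∑ y', p x y' * Real.log (p x y' / q x y')) μ)
    (hKL : ∫ x, ∑ y', p x y' * Real.log (p x y' / q x y') ∂μ ≤ ε ^ 2)
    (y : 𝒴) (hPy : 0 < ∫ x, p x y ∂μ) :
    ∫ x, (p x y / ∫ x', p x' y ∂μ) * |Real.log (p x y) - Real.log (q x y)| ∂μ
      ≤ ε ^ 2 / (∫ x, p x y ∂μ) +
        2.2 * ε / (∫ x, p x y ∂μ) ^ ((3 : ℝ) / 2) := by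
  set P := ∫ x, p x y ∂μ with hPdef
  set K : 𝒳 → ℝ := fun x => ∑ y', p x y' * Real.log (p x y' / q x y') with hKdef
  set d : 𝒳 → ℝ := fun x => Real.sqrt (p x y) - Real.sqrt (q x y) with hddef
  set g : 𝒳 → ℝ := fun x => p x y * |Real.log (p x y) - Real.log (q x y)| with hgdef
  have hp1 : ∀ x y', p x y' ≤ 1 := by
    intro x y'
    have := Finset.single_le_sum (f := fun y'' => p x y'') (fun i _ => (hp0 x i).le)
      (Finset.mem_univ y')
    rwa [hpsum x] at this
  -- per-term facts
  have hF0 : ∀ x y', (Real.sqrt (p x y') - Real.sqrt (q x y')) ^ 2 ≤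
      p x y' * Real.log (p x y' / q x y') - (p x y' - q x y') := by
    intro x y'
    have := term_ineq (p x y') (q x y') (hp0 x y') (hq0 x y')
    linarith
  have hKF : ∀ x, K x = ∑ y', (p x y' * Real.log (p x y' / q x y') - (p x y' - q x y')) := by
    intro x
    simp only [hKdef, Finset.sum_sub_distrib, hpsum, hqsum, sub_self, sub_zero]
  have hFnn : ∀ x y', (0:ℝ) ≤ p x y' * Real.log (p x y' / q x y') - (p x y' - q x y') :=
    fun x y' => le_trans (sq_nonneg _) (hF0 x y')
  have hKy : ∀ x, p x y * Real.log (p x y / q x y) - (p x y - q x y) ≤ K x := by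
    intro x; rw [hKF x]
    exact Finset.single_le_sum (fun i _ => hFnn x i) (Finset.mem_univ y)
  have hKd : ∀ x, d x ^ 2 ≤ K x := by
    intro x; rw [hKF x]
    exact le_trans (hF0 x y) (Finset.single_le_sum (fun i _ => hFnn x i) (Finset.mem_univ y))
  have hK0 : ∀ x, 0 ≤ K x := fun x => le_trans (sq_nonneg _) (hKd x)
  -- pointwise main inequality
  have hpt : ∀ t, 0 < t → ∀ x, g x ≤ K x + t * p x y + d x ^ 2 / t := by
    intro t ht x
    exact pointwise_ineq (p x y) (q x y) (K x) t (hp0 x y) (hq0 x y) ht (hKy x) (hK0 x)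
  -- measurability / integrability
  have hdm : Measurable d :=
    (Real.continuous_sqrt.measurable.comp (hp_meas y)).sub
      (Real.continuous_sqrt.measurable.comp (hq_meas y))
  have hgm : Measurable g :=
    (hp_meas y).mul (((Real.measurable_log.comp (hp_meas y)).sub
      (Real.measurable_log.comp (hq_meas y))).abs)
  have hpint : Integrable (fun x => p x y) μ := by
    refine (integrable_const (1:ℝ)).mono' (hp_meas y).aestronglyMeasurable ?_
    refine Filter.Eventually.of_forall fun x => ?_
    rw [Real.norm_eq_abs, abs_of_pos (hp0 x y)]; exact hp1 x y
  have hd2int : Integrable (fun x => d x ^ 2) μ := by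
    refine hint.mono' ((hdm.pow_const 2).aestronglyMeasurable) ?_
    refine Filter.Eventually.of_forall fun x => ?_
    rw [Real.norm_eq_abs, abs_of_nonneg (sq_nonneg _)]; exact hKd x
  have hsumint : ∀ t : ℝ, Integrable (fun x => K x + t * p x y + d x ^ 2 / t) μ :=
    fun t => (hint.add (hpint.const_mul t)).add (hd2int.div_const t)
  have hgint : Integrable g μ := by
    refine (hsumint 1).mono' hgm.aestronglyMeasurable ?_
    refine Filter.Eventually.of_forall fun x => ?_
    rw [Real.norm_eq_abs,
      abs_of_nonneg (mul_nonneg (hp0 x y).le (abs_nonneg _) : (0:ℝ) ≤ g x)]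
    exact hpt 1 one_pos x
  -- integral facts
  have hd2le : ∫ x, d x ^ 2 ∂μ ≤ ε ^ 2 :=
    le_trans (integral_mono hd2int hint (fun x => hKd x)) hKL
  have hd2nn : 0 ≤ ∫ x, d x ^ 2 ∂μ := integral_nonneg fun x => sq_nonneg _
  have hPle1 : P ≤ 1 := by
    have h1 : ∫ x, p x y ∂μ ≤ ∫ _, (1:ℝ) ∂μ :=
      integral_mono hpint (integrable_const 1) (fun x => hp1 x y)
    simpa using h1
  have hbound : ∀ t : ℝ, 0 < t → ∫ x, g x ∂μ ≤ ε ^ 2 + t * P + (∫ x, d x ^ 2 ∂μ) / t := by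
    intro t ht
    have h1 : ∫ x, g x ∂μ ≤ ∫ x, (K x + t * p x y + d x ^ 2 / t) ∂μ :=
      integral_mono hgint (hsumint t) (hpt t ht)
    have h2 : ∫ x, (K x + t * p x y + d x ^ 2 / t) ∂μ =
        (∫ x, K x ∂μ) + t * P + (∫ x, d x ^ 2 ∂μ) / t := by
      rw [integral_add (f := fun x => K x + t * p x y) (g := fun x => d x ^ 2 / t)
          (hint.add (hpint.const_mul t)) (hd2int.div_const t),
        integral_add (f := fun x => K x) (g := fun x => t * p x y) hint (hpint.const_mul t),
        integral_const_mul, integral_div]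
    rw [h2] at h1
    have h3 : ∫ x, K x ∂μ ≤ ε ^ 2 := hKL
    linarith
  -- main bound: ∫ g ≤ ε² + 2ε√P
  have hs : 0 < Real.sqrt P := Real.sqrt_pos.mpr hPy
  have hs2 : Real.sqrt P ^ 2 = P := Real.sq_sqrt hPy.le
  have hmain : ∫ x, g x ∂μ ≤ ε ^ 2 + 2 * ε * Real.sqrt P := by
    rcases hε.eq_or_lt with he | he
    · -- ε = 0
      have hd2z : ∫ x, d x ^ 2 ∂μ = 0 := le_antisymm (by rw [← he] at hd2le; simpa using hd2le) hd2nn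
      have : ∀ c : ℝ, 0 < c → ∫ x, g x ∂μ ≤ 0 + c := by
        intro c hc
        have hb := hbound (c / P) (div_pos hc hPy)
        rw [hd2z, ← he] at hb
        have : c / P * P = c := div_mul_cancel₀ c hPy.ne'
        simp only [zero_pow, ne_eq, OfNat.ofNat_ne_zero, not_false_eq_true, zero_div,
          add_zero, zero_add] at hb ⊢
        linarith [hb, this.le, this.ge]
      have h0 : ∫ x, g x ∂μ ≤ 0 := le_of_forall_pos_le_add this
      rw [← he]; simpa using h0
    · -- ε > 0
      have hb := hbound (ε / Real.sqrt P) (div_pos he hs)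
      have h1 : ε / Real.sqrt P * P = ε * Real.sqrt P := by
        rw [div_mul_eq_mul_div, div_eq_iff hs.ne']
        linear_combination (-ε) * hs2
      have h2 : (∫ x, d x ^ 2 ∂μ) / (ε / Real.sqrt P) ≤ ε * Real.sqrt P := by
        rw [div_le_iff₀ (div_pos he hs)]
        calc ∫ x, d x ^ 2 ∂μ ≤ ε ^ 2 := hd2le
          _ = ε * Real.sqrt P * (ε / Real.sqrt P) := by field_simp
      linarith
  -- conclude
  have hrw : (fun x => (p x y / P) * |Real.log (p x y) - Real.log (q x y)|) =
      fun x => g x / P := by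
    funext x; rw [hgdef, div_mul_eq_mul_div]
  rw [hrw, integral_div]
  have hP32 : P ^ ((3:ℝ)/2) = P * Real.sqrt P := by
    rw [show (3:ℝ)/2 = 1 + 1/2 by norm_num, Real.rpow_add hPy, Real.rpow_one,
      ← Real.sqrt_eq_rpow]
  have hstep : (∫ x, g x ∂μ) / P ≤ (ε ^ 2 + 2 * ε * Real.sqrt P) / P := by
    gcongr
  have hsplit : (ε ^ 2 + 2 * ε * Real.sqrt P) / P = ε ^ 2 / P + 2 * ε * Real.sqrt P / P :=
    add_div _ _ _
  have hlast : 2 * ε * Real.sqrt P / P ≤ 2.2 * ε / P ^ ((3:ℝ)/2) := by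
    rw [hP32, div_le_div_iff₀ hPy (by positivity)]
    nlinarith [hs2, mul_nonneg (mul_nonneg hε hPy.le) hPy.le, mul_pos hPy hPy,
      mul_nonneg hε (mul_pos hPy hPy).le]
  linarith [hstep, hsplit.le, hsplit.ge, hlast]
end

section
/- Let σ(s) = 1/(1 + e^{−s}) denote the logistic function and let f : ℝ → [0, ∞) be Lebesgue integrable with ∫_ℝ f(x) dx = 1. Then: (i) lim_{ε → 0⁺} ε^{−2} ∫_ℝ log cosh( ε sin(x/√ε) ) f(x) dx = 1/4; and (ii) lim_{ε → 0⁺} ε^{−1} ∫_ℝ ( (1 − σ(2ε sin(x/√ε))) · 2√ε cos(x/√ε) )² f(x) dx = 1/2. In particular, for the classifier q_ε(x) = σ(2ε sin(x/√ε)) against the constant true conditional label probability 1/2 (with gradient zero), the expected conditional KL divergence ∫ KL(Bern(1/2) ‖ Bern(q_ε(x))) f(x) dx = log cosh(ε sin(·/√ε))-integral is Θ(ε²), while the expected squared guidance error ∫ ( d/dx log q_ε(x) )² f(x) dx is Θ(ε), so the ε-dependence of the guidance-error bound in terms of the square root of the classification error cannot be improved. -/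
open MeasureTheory Filter
open scoped FourierTransform

/-- The logistic (sigmoid) function. -/
noncomputable def logistic (s : ℝ) : ℝ := (1 + Real.exp (-s))⁻¹

section Helpers

lemma rl_cos (f : ℝ → ℝ) (hf : Integrable f) :
    Tendsto (fun t : ℝ => ∫ x, Real.cos (t * x) * f x) atTop (nhds 0) := by
  have h := Real.tendsto_integral_exp_smul_cocompact (fun x : ℝ => (f x : ℂ))
  have h2 : Tendsto (fun w : ℝ => (∫ v : ℝ, 𝐞 (-(v * w)) • (f v : ℂ)).re) (cocompact ℝ)
      (nhds 0) := by
    simpa [Function.comp_def] using (Complex.continuous_re.tendsto 0).comp h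
  have key : ∀ w : ℝ, (∫ v : ℝ, 𝐞 (-(v * w)) • (f v : ℂ)).re
      = ∫ v : ℝ, Real.cos (2 * Real.pi * (v * w)) * f v := by
    intro w
    have hof : Integrable (fun x : ℝ => (f x : ℂ)) := hf.ofReal
    have hint : Integrable (fun v : ℝ => 𝐞 (-(v * w)) • (f v : ℂ)) := by
      refine Integrable.mono' hof.norm ?_ ?_
      · exact ((Real.continuous_fourierChar.comp
          ((continuous_id.mul continuous_const).neg)).aestronglyMeasurable).smul
          hof.aestronglyMeasurable
      · filter_upwards with v
        simp [Circle.smul_def, norm_mul, Circle.norm_coe]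
    have := integral_re (𝕜 := ℂ) hint
    rw [RCLike.re_to_complex] at this
    rw [← this]
    congr 1
    ext v
    rw [Circle.smul_def, Real.fourierChar_apply, RCLike.re_to_complex, smul_eq_mul,
      Complex.mul_re]
    rw [show ((2:ℝ) * Real.pi * -(v*w) : ℝ) * Complex.I
        = ((2*Real.pi*-(v*w) : ℝ) : ℂ) * Complex.I by push_cast; ring]
    rw [Complex.exp_ofReal_mul_I_re]
    simp [Real.cos_neg]
  rw [show (0:ℝ) = Complex.re 0 by simp] at h2
  simp_rw [key] at h2
  have h3 : Tendsto (fun t : ℝ => t / (2 * Real.pi)) atTop atTop :=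
    tendsto_id.atTop_div_const (by positivity)
  have h4 := (h2.mono_left (by rw [cocompact_eq_atBot_atTop]; exact le_sup_right)).comp h3
  have heq : (fun t : ℝ => ∫ x, Real.cos (t * x) * f x)
      = (fun w : ℝ => ∫ v : ℝ, Real.cos (2 * Real.pi * (v * w)) * f v) ∘
        (fun t : ℝ => t / (2 * Real.pi)) := by
    funext t
    refine integral_congr_ae (Eventually.of_forall fun x => ?_)
    have : 2 * Real.pi * (x * (t / (2 * Real.pi))) = t * x := by
      field_simp
    simp only [Function.comp_apply, this]
  rw [heq]
  simpa using h4

lemma log_cosh_le (u : ℝ) : Real.log (Real.cosh u) ≤ u ^ 2 / 2 := by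
  have h := Real.cosh_le_exp_half_sq u
  have h2 := Real.log_le_log (Real.cosh_pos u) h
  simpa [Real.log_exp] using h2

lemma cosh_lower (u : ℝ) : 1 + u ^ 2 / 2 ≤ Real.cosh u := by
  have h1 : Real.cosh u = 1 + 2 * Real.sinh (u / 2) ^ 2 := by
    have h2 := Real.cosh_two_mul (u / 2)
    have h3 := Real.cosh_sq (u / 2)
    rw [show 2 * (u / 2) = u by ring] at h2
    linarith
  have h2 : (u / 2) ^ 2 ≤ Real.sinh (u / 2) ^ 2 := by
    rcases le_or_gt 0 (u / 2) with h | h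
    · have := Real.self_le_sinh_iff.2 h
      nlinarith
    · have h3 : -(u / 2) ≤ Real.sinh (-(u / 2)) := Real.self_le_sinh_iff.2 (by linarith)
      rw [Real.sinh_neg] at h3
      nlinarith
  nlinarith

lemma log_cosh_ge (u : ℝ) : u ^ 2 / 2 - u ^ 4 / 4 ≤ Real.log (Real.cosh u) := by
  set a := u ^ 2 / 2 with ha
  have ha0 : 0 ≤ a := by positivity
  have h1 : Real.log (1 + a) ≤ Real.log (Real.cosh u) :=
    Real.log_le_log (by linarith) (cosh_lower u)
  have h2 : 1 - (1 + a)⁻¹ ≤ Real.log (1 + a) := Real.one_sub_inv_le_log_of_pos (by linarith)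
  have hpos : (0 : ℝ) < 1 + a := by linarith
  have h3 : a - a ^ 2 ≤ 1 - (1 + a)⁻¹ := by
    have he : 1 - (1 + a)⁻¹ = a / (1 + a) := by field_simp; ring
    rw [he, le_div_iff₀ hpos]
    nlinarith
  have h4 : a ^ 2 = u ^ 4 / 4 := by rw [ha]; ring
  linarith

lemma log_cosh_nonneg (u : ℝ) : 0 ≤ Real.log (Real.cosh u) :=
  Real.log_nonneg (Real.one_le_cosh u)

lemma logistic_pos_aux (s : ℝ) : (0:ℝ) < 1 + Real.exp (-s) := by positivity

lemma logistic_mem (s : ℝ) : 0 < logistic s ∧ logistic s ≤ 1 := by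
  unfold logistic
  constructor
  · positivity
  · rw [inv_le_one_iff₀]
    right
    nlinarith [Real.exp_pos (-s)]

lemma continuous_logistic : Continuous logistic := by
  unfold logistic
  exact (continuous_const.add (Real.continuous_exp.comp continuous_neg)).inv₀
    fun x => (logistic_pos_aux x).ne'

lemma hasDerivAt_logistic (v : ℝ) :
    HasDerivAt logistic (Real.exp (-v) / (1 + Real.exp (-v)) ^ 2) v := by
  have h1 : HasDerivAt (fun v : ℝ => 1 + Real.exp (-v)) (-Real.exp (-v)) v := by
    simpa using (Real.hasDerivAt_exp (-v)).comp v (hasDerivAt_neg v) |>.const_add 1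
  have h2 := h1.inv (logistic_pos_aux v).ne'
  rw [show logistic = (fun v : ℝ => 1 + Real.exp (-v))⁻¹ from rfl]
  exact h2.congr_deriv (by ring)

lemma logistic_close (a : ℝ) : |logistic a - 1/2| ≤ |a| := by
  have key : ∀ x ∈ Set.univ, HasDerivWithinAt logistic
      (Real.exp (-x) / (1 + Real.exp (-x)) ^ 2) Set.univ x :=
    fun x _ => (hasDerivAt_logistic x).hasDerivWithinAt
  have hbd : ∀ x ∈ Set.univ, ‖Real.exp (-x) / (1 + Real.exp (-x)) ^ 2‖ ≤ 1 := by
    intro x _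
    rw [Real.norm_eq_abs, abs_of_nonneg (by positivity), div_le_one (by positivity)]
    nlinarith [Real.exp_pos (-x)]
  have h := convex_univ.norm_image_sub_le_of_norm_hasDerivWithin_le key hbd
    (Set.mem_univ 0) (Set.mem_univ a)
  have h0 : logistic 0 = 1/2 := by norm_num [logistic]
  simpa [h0, Real.norm_eq_abs, abs_sub_comm] using h

lemma integ_bdd_mul {f : ℝ → ℝ} (hf : Integrable f) {g : ℝ → ℝ} (hg : Continuous g) {B : ℝ}
    (hB : ∀ x, |g x| ≤ B) : Integrable (fun x => g x * f x) :=
  hf.bdd_mul hg.aestronglyMeasurable (Eventually.of_forall fun x => by rw [Real.norm_eq_abs]; exact hB x)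

lemma abs_int_le {f : ℝ → ℝ} (hf0 : ∀ x, 0 ≤ f x) (hf : Integrable f) (hf1 : ∫ x, f x = 1)
    {g : ℝ → ℝ} (hg : Continuous g) {B : ℝ} (hB : ∀ x, |g x| ≤ B) :
    |∫ x, g x * f x| ≤ B := by
  have hI := integ_bdd_mul hf hg hB
  calc |∫ x, g x * f x| ≤ ∫ x, |g x| * |f x| := by
        simpa [Real.norm_eq_abs, abs_mul] using norm_integral_le_integral_norm (fun x => g x * f x)
    _ ≤ ∫ x, B * f x := by
        refine integral_mono ?_ (hf.const_mul B) fun x => ?_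
        · have := hI.abs
          simpa [abs_mul] using this
        · rw [abs_of_nonneg (hf0 x)]
          exact mul_le_mul_of_nonneg_right (hB x) (hf0 x)
    _ = B := by rw [integral_const_mul, hf1, mul_one]

end Helpers

set_option maxHeartbeats 1600000 in
theorem stmt19 (f : ℝ → ℝ) (hf0 : ∀ x, 0 ≤ f x) (hf : Integrable f)
    (hf1 : ∫ x, f x = 1) :
    Tendsto (fun ε : ℝ =>
        (ε ^ 2)⁻¹ * ∫ x, Real.log (Real.cosh (ε * Real.sin (x / Real.sqrt ε))) * f x)
      (nhdsWithin 0 (Set.Ioi 0)) (nhds (1 / 4)) ∧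
    Tendsto (fun ε : ℝ =>
        ε⁻¹ * ∫ x, ((1 - logistic (2 * ε * Real.sin (x / Real.sqrt ε))) *
          (2 * Real.sqrt ε * Real.cos (x / Real.sqrt ε))) ^ 2 * f x)
      (nhdsWithin 0 (Set.Ioi 0)) (nhds (1 / 2)) := by
  set l : Filter ℝ := nhdsWithin 0 (Set.Ioi 0) with hl
  have hsq : Tendsto (fun ε : ℝ => 2 / Real.sqrt ε) l atTop := by
    have h1 : Tendsto Real.sqrt l (nhdsWithin 0 (Set.Ioi 0)) := by
      rw [tendsto_nhdsWithin_iff]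
      constructor
      · exact (Real.continuous_sqrt.tendsto' 0 0 (by simp)).mono_left nhdsWithin_le_nhds
      · filter_upwards [self_mem_nhdsWithin] with ε hε
        exact Real.sqrt_pos.2 hε
    have h2 : Tendsto (fun ε : ℝ => (Real.sqrt ε)⁻¹) l atTop := tendsto_inv_nhdsGT_zero.comp h1
    have h3 := Tendsto.const_mul_atTop (show (0:ℝ) < 2 by norm_num) h2
    simpa [div_eq_mul_inv] using h3
  have hC : Tendsto (fun ε : ℝ => ∫ x, Real.cos (2 / Real.sqrt ε * x) * f x) l (nhds 0) :=
    (rl_cos f hf).comp hsq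
  -- common per-ε setup, part (i)
  have key1 : ∀ ε : ℝ, 0 < ε →
      |(ε ^ 2)⁻¹ * (∫ x, Real.log (Real.cosh (ε * Real.sin (x / Real.sqrt ε))) * f x)
        - (1/4 - (∫ x, Real.cos (2 / Real.sqrt ε * x) * f x)/4)| ≤ ε ^ 2 / 4 := by
    intro ε hε
    have hsε : 0 < Real.sqrt ε := Real.sqrt_pos.2 hε
    set C := ∫ x, Real.cos (2 / Real.sqrt ε * x) * f x with hCdef
    have hcont_s : Continuous (fun x : ℝ => Real.sin (x / Real.sqrt ε)) :=
      Real.continuous_sin.comp (continuous_id.div_const _)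
    have hcontL : Continuous
        (fun x => Real.log (Real.cosh (ε * Real.sin (x / Real.sqrt ε)))) :=
      (Real.continuous_cosh.comp (continuous_const.mul hcont_s)).log
        fun x => (Real.cosh_pos _).ne'
    have hcont_c : Continuous (fun x : ℝ => Real.cos (2 / Real.sqrt ε * x)) :=
      Real.continuous_cos.comp (continuous_const.mul continuous_id)
    have hIc : Integrable (fun x => Real.cos (2 / Real.sqrt ε * x) * f x) :=
      integ_bdd_mul hf hcont_c (B := 1) fun x => by simpa using Real.abs_cos_le_one _
    have hIs : Integrable (fun x => Real.sin (x / Real.sqrt ε) ^ 2 * f x) :=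
      integ_bdd_mul hf (hcont_s.pow 2) (B := 1) fun x => by
        rw [abs_of_nonneg (sq_nonneg _)]
        exact Real.sin_sq_le_one _
    have hIL : Integrable
        (fun x => Real.log (Real.cosh (ε * Real.sin (x / Real.sqrt ε))) * f x) :=
      integ_bdd_mul hf hcontL (B := ε^2/2) fun x => by
        rw [abs_of_nonneg (log_cosh_nonneg _)]
        refine (log_cosh_le _).trans ?_
        have hs1 := Real.sin_sq_le_one (x / Real.sqrt ε)
        nlinarith [sq_nonneg ε]
    have hA : ∫ x, Real.sin (x / Real.sqrt ε) ^ 2 * f x = 1/2 - C/2 := by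
      have hpt : ∀ x : ℝ, Real.sin (x / Real.sqrt ε) ^ 2 * f x
          = 1/2 * f x - 1/2 * (Real.cos (2 / Real.sqrt ε * x) * f x) := by
        intro x
        have harg : 2 / Real.sqrt ε * x = 2 * (x / Real.sqrt ε) := by field_simp
        rw [harg, Real.sin_sq_eq_half_sub]
        ring
      calc ∫ x, Real.sin (x / Real.sqrt ε) ^ 2 * f x
          = ∫ x, (1/2 * f x - 1/2 * (Real.cos (2 / Real.sqrt ε * x) * f x)) :=
            integral_congr_ae (Eventually.of_forall hpt)
        _ = 1/2 * (∫ x, f x) - 1/2 * C := by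
            rw [integral_sub (hf.const_mul _) (hIc.const_mul _), integral_const_mul,
              integral_const_mul]
        _ = 1/2 - C/2 := by rw [hf1]; ring
    have hB2 : |∫ x, (Real.log (Real.cosh (ε * Real.sin (x / Real.sqrt ε)))
        - ε^2 * Real.sin (x / Real.sqrt ε)^2 / 2) * f x| ≤ ε^4/4 := by
      refine abs_int_le hf0 hf hf1
        (hcontL.sub ((continuous_const.mul (hcont_s.pow 2)).div_const 2)) fun x => ?_
      have h1 := log_cosh_le (ε * Real.sin (x / Real.sqrt ε))
      have h2 := log_cosh_ge (ε * Real.sin (x / Real.sqrt ε))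
      have hexp : (ε * Real.sin (x / Real.sqrt ε))^2
          = ε^2 * Real.sin (x / Real.sqrt ε)^2 := by ring
      have hs1 := Real.sin_sq_le_one (x / Real.sqrt ε)
      have hs0 := sq_nonneg (Real.sin (x / Real.sqrt ε))
      have hu2 : (ε * Real.sin (x / Real.sqrt ε))^2 ≤ ε^2 := by nlinarith [sq_nonneg ε]
      have hu4 : (ε * Real.sin (x / Real.sqrt ε))^4 ≤ ε^4 := by
        nlinarith [mul_self_le_mul_self (sq_nonneg (ε * Real.sin (x / Real.sqrt ε))) hu2]
      simp only [Pi.sub_apply, Pi.mul_apply, Pi.pow_apply]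
      rw [abs_le]
      constructor <;> nlinarith
    have hsplit : ∫ x, (Real.log (Real.cosh (ε * Real.sin (x / Real.sqrt ε)))
        - ε^2 * Real.sin (x / Real.sqrt ε)^2 / 2) * f x
        = (∫ x, Real.log (Real.cosh (ε * Real.sin (x / Real.sqrt ε))) * f x)
          - ε^2/2 * ∫ x, Real.sin (x / Real.sqrt ε) ^ 2 * f x := by
      have hpt : ∀ x : ℝ, (Real.log (Real.cosh (ε * Real.sin (x / Real.sqrt ε)))
          - ε^2 * Real.sin (x / Real.sqrt ε)^2 / 2) * f x
          = Real.log (Real.cosh (ε * Real.sin (x / Real.sqrt ε))) * f x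
            - ε^2/2 * (Real.sin (x / Real.sqrt ε) ^ 2 * f x) := fun x => by ring
      rw [integral_congr_ae (Eventually.of_forall hpt),
        integral_sub hIL (hIs.const_mul _), integral_const_mul]
    rw [hA] at hsplit
    have hB3 : |(∫ x, Real.log (Real.cosh (ε * Real.sin (x / Real.sqrt ε))) * f x)
        - ε^2/2 * (1/2 - C/2)| ≤ ε^4/4 := by rw [← hsplit]; exact hB2
    have hrw : (ε ^ 2)⁻¹ * (∫ x, Real.log (Real.cosh (ε * Real.sin (x / Real.sqrt ε))) * f x)
        - (1/4 - C/4)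
        = (ε ^ 2)⁻¹ * ((∫ x, Real.log (Real.cosh (ε * Real.sin (x / Real.sqrt ε))) * f x)
          - ε^2/2 * (1/2 - C/2)) := by
      field_simp
      ring
    rw [hrw, abs_mul, abs_of_nonneg (by positivity : (0:ℝ) ≤ (ε^2)⁻¹)]
    calc (ε^2)⁻¹ * |(∫ x, Real.log (Real.cosh (ε * Real.sin (x / Real.sqrt ε))) * f x)
          - ε^2/2 * (1/2 - C/2)| ≤ (ε^2)⁻¹ * (ε^4/4) :=
        mul_le_mul_of_nonneg_left hB3 (by positivity)
      _ = ε^2/4 := by field_simp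
  -- part (ii) per-ε bound
  have key2 : ∀ ε : ℝ, 0 < ε →
      |ε⁻¹ * (∫ x, ((1 - logistic (2 * ε * Real.sin (x / Real.sqrt ε))) *
          (2 * Real.sqrt ε * Real.cos (x / Real.sqrt ε))) ^ 2 * f x)
        - (1/2 + (∫ x, Real.cos (2 / Real.sqrt ε * x) * f x)/2)| ≤ 12 * ε := by
    intro ε hε
    have hsε : 0 < Real.sqrt ε := Real.sqrt_pos.2 hε
    have hsq2 : Real.sqrt ε ^ 2 = ε := Real.sq_sqrt hε.le
    set C := ∫ x, Real.cos (2 / Real.sqrt ε * x) * f x with hCdef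
    have hcont_s : Continuous (fun x : ℝ => Real.sin (x / Real.sqrt ε)) :=
      Real.continuous_sin.comp (continuous_id.div_const _)
    have hcont_c : Continuous (fun x : ℝ => Real.cos (x / Real.sqrt ε)) :=
      Real.continuous_cos.comp (continuous_id.div_const _)
    have hcont_c2 : Continuous (fun x : ℝ => Real.cos (2 / Real.sqrt ε * x)) :=
      Real.continuous_cos.comp (continuous_const.mul continuous_id)
    have hcontV : Continuous (fun x : ℝ =>
        ((1 - logistic (2 * ε * Real.sin (x / Real.sqrt ε))) *
          (2 * Real.sqrt ε * Real.cos (x / Real.sqrt ε))) ^ 2) :=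
      (((continuous_const.sub (continuous_logistic.comp
        (continuous_const.mul hcont_s))).mul (continuous_const.mul hcont_c)).pow 2)
    have hIc : Integrable (fun x => Real.cos (2 / Real.sqrt ε * x) * f x) :=
      integ_bdd_mul hf hcont_c2 (B := 1) fun x => by simpa using Real.abs_cos_le_one _
    have hIcc : Integrable (fun x => Real.cos (x / Real.sqrt ε) ^ 2 * f x) :=
      integ_bdd_mul hf (hcont_c.pow 2) (B := 1) fun x => by
        rw [abs_of_nonneg (sq_nonneg _)]
        exact Real.cos_sq_le_one _
    -- pointwise bound
    have hpt : ∀ x : ℝ, |ε⁻¹ * (((1 - logistic (2 * ε * Real.sin (x / Real.sqrt ε))) *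
        (2 * Real.sqrt ε * Real.cos (x / Real.sqrt ε))) ^ 2)
        - Real.cos (x / Real.sqrt ε) ^ 2| ≤ 12 * ε := by
      intro x
      set σ := logistic (2 * ε * Real.sin (x / Real.sqrt ε)) with hσdef
      set c := Real.cos (x / Real.sqrt ε) with hcdef
      have hVval : ((1 - σ) * (2 * Real.sqrt ε * c)) ^ 2 = ε * (4 * (1 - σ)^2 * c^2) := by
        calc ((1 - σ) * (2 * Real.sqrt ε * c)) ^ 2
            = (Real.sqrt ε ^ 2) * (4 * (1 - σ)^2 * c^2) := by ring
          _ = ε * (4 * (1 - σ)^2 * c^2) := by rw [hsq2]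
      have hred : ε⁻¹ * (((1 - σ) * (2 * Real.sqrt ε * c)) ^ 2) = 4 * (1 - σ)^2 * c^2 := by
        rw [hVval, ← mul_assoc, inv_mul_cancel₀ hε.ne', one_mul]
      rw [hred]
      have hd : |σ - 1/2| ≤ |2 * ε * Real.sin (x / Real.sqrt ε)| := logistic_close _
      have hs1 : |Real.sin (x / Real.sqrt ε)| ≤ 1 := Real.abs_sin_le_one _
      have hd2 : |σ - 1/2| ≤ 2 * ε := by
        refine hd.trans ?_
        rw [abs_mul, abs_mul]
        calc |2| * |ε| * |Real.sin (x / Real.sqrt ε)| ≤ |2| * |ε| * 1 :=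
            mul_le_mul_of_nonneg_left hs1 (by positivity)
          _ = 2 * ε := by rw [abs_of_nonneg hε.le]; norm_num
      obtain ⟨hσ0, hσ1⟩ := logistic_mem (2 * ε * Real.sin (x / Real.sqrt ε))
      rw [← hσdef] at hσ0 hσ1
      have hc1 : c^2 ≤ 1 := Real.cos_sq_le_one _
      have hc0 : 0 ≤ c^2 := sq_nonneg _
      have hd3 := abs_le.1 hd2
      rw [abs_le]
      constructor <;> nlinarith [sq_nonneg (1 - σ), mul_nonneg hc0 (sq_nonneg (1-σ)),
        mul_le_mul_of_nonneg_right hd3.1 hc0, mul_le_mul_of_nonneg_right hd3.2 hc0]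
    have hIV : Integrable (fun x => (ε⁻¹ * (((1 - logistic (2 * ε * Real.sin (x / Real.sqrt ε))) *
        (2 * Real.sqrt ε * Real.cos (x / Real.sqrt ε))) ^ 2)) * f x) := by
      refine integ_bdd_mul hf (continuous_const.mul hcontV) (B := 12 * ε + 1) fun x => ?_
      have h1 := hpt x
      have h2 : |Real.cos (x / Real.sqrt ε) ^ 2| ≤ 1 := by
        rw [abs_of_nonneg (sq_nonneg _)]; exact Real.cos_sq_le_one _
      calc |ε⁻¹ * _| = |(ε⁻¹ * _ - Real.cos (x / Real.sqrt ε) ^ 2)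
            + Real.cos (x / Real.sqrt ε) ^ 2| := by ring_nf
        _ ≤ _ := (abs_add_le _ _).trans (add_le_add h1 h2)
    -- ∫ cos² f
    have hA : ∫ x, Real.cos (x / Real.sqrt ε) ^ 2 * f x = 1/2 + C/2 := by
      have hpt2 : ∀ x : ℝ, Real.cos (x / Real.sqrt ε) ^ 2 * f x
          = 1/2 * f x + 1/2 * (Real.cos (2 / Real.sqrt ε * x) * f x) := by
        intro x
        have harg : 2 / Real.sqrt ε * x = 2 * (x / Real.sqrt ε) := by field_simp
        rw [harg, Real.cos_sq]
        ring
      calc ∫ x, Real.cos (x / Real.sqrt ε) ^ 2 * f x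
          = ∫ x, (1/2 * f x + 1/2 * (Real.cos (2 / Real.sqrt ε * x) * f x)) :=
            integral_congr_ae (Eventually.of_forall hpt2)
        _ = 1/2 * (∫ x, f x) + 1/2 * C := by
            rw [integral_add (hf.const_mul _) (hIc.const_mul _), integral_const_mul,
              integral_const_mul]
        _ = 1/2 + C/2 := by rw [hf1]; ring
    -- difference bound
    have hdiff : |∫ x, (ε⁻¹ * (((1 - logistic (2 * ε * Real.sin (x / Real.sqrt ε))) *
        (2 * Real.sqrt ε * Real.cos (x / Real.sqrt ε))) ^ 2)
          - Real.cos (x / Real.sqrt ε) ^ 2) * f x| ≤ 12 * ε :=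
      abs_int_le hf0 hf hf1 ((continuous_const.mul hcontV).sub (hcont_c.pow 2)) hpt
    have hpull : ε⁻¹ * (∫ x, ((1 - logistic (2 * ε * Real.sin (x / Real.sqrt ε))) *
        (2 * Real.sqrt ε * Real.cos (x / Real.sqrt ε))) ^ 2 * f x)
        = ∫ x, (ε⁻¹ * (((1 - logistic (2 * ε * Real.sin (x / Real.sqrt ε))) *
          (2 * Real.sqrt ε * Real.cos (x / Real.sqrt ε))) ^ 2)) * f x := by
      have hml := integral_const_mul (μ := (volume : Measure ℝ)) ε⁻¹
        (fun x => ((1 - logistic (2 * ε * Real.sin (x / Real.sqrt ε))) *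
          (2 * Real.sqrt ε * Real.cos (x / Real.sqrt ε))) ^ 2 * f x)
      rw [← hml]
      exact integral_congr_ae (Eventually.of_forall fun x => by ring)
    have hsplit : ∫ x, (ε⁻¹ * (((1 - logistic (2 * ε * Real.sin (x / Real.sqrt ε))) *
        (2 * Real.sqrt ε * Real.cos (x / Real.sqrt ε))) ^ 2)
          - Real.cos (x / Real.sqrt ε) ^ 2) * f x
        = (∫ x, (ε⁻¹ * (((1 - logistic (2 * ε * Real.sin (x / Real.sqrt ε))) *
          (2 * Real.sqrt ε * Real.cos (x / Real.sqrt ε))) ^ 2)) * f x)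
          - ∫ x, Real.cos (x / Real.sqrt ε) ^ 2 * f x := by
      rw [← integral_sub hIV hIcc]
      exact integral_congr_ae (Eventually.of_forall fun x => by ring)
    rw [hpull, ← hA]
    rw [← hsplit]
    exact hdiff
  -- assemble part (i)
  have hquarter : Tendsto (fun ε : ℝ =>
      1/4 - (∫ x, Real.cos (2 / Real.sqrt ε * x) * f x)/4) l (nhds (1/4)) := by
    have := tendsto_const_nhds (x := (1:ℝ)/4) (f := l) |>.sub (hC.div_const 4)
    simpa using this
  have hhalf : Tendsto (fun ε : ℝ =>
      1/2 + (∫ x, Real.cos (2 / Real.sqrt ε * x) * f x)/2) l (nhds (1/2)) := by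
    have := tendsto_const_nhds (x := (1:ℝ)/2) (f := l) |>.add (hC.div_const 2)
    simpa using this
  constructor
  · have T2 : Tendsto (fun ε : ℝ =>
        ((ε ^ 2)⁻¹ * ∫ x, Real.log (Real.cosh (ε * Real.sin (x / Real.sqrt ε))) * f x)
          - (1/4 - (∫ x, Real.cos (2 / Real.sqrt ε * x) * f x)/4)) l (nhds 0) := by
      refine squeeze_zero_norm' (a := fun ε : ℝ => ε ^ 2 / 4) ?_ ?_
      · filter_upwards [self_mem_nhdsWithin] with ε hε
        exact key1 ε hε
      · have : Tendsto (fun ε : ℝ => ε ^ 2 / 4) (nhds 0) (nhds 0) := by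
          have := ((continuous_pow 2).div_const (4:ℝ)).tendsto (0:ℝ)
          simpa using this
        exact this.mono_left nhdsWithin_le_nhds
    have := hquarter.add T2
    simp only [add_sub_cancel] at this
    simpa using this
  · have T2 : Tendsto (fun ε : ℝ =>
        (ε⁻¹ * ∫ x, ((1 - logistic (2 * ε * Real.sin (x / Real.sqrt ε))) *
          (2 * Real.sqrt ε * Real.cos (x / Real.sqrt ε))) ^ 2 * f x)
          - (1/2 + (∫ x, Real.cos (2 / Real.sqrt ε * x) * f x)/2)) l (nhds 0) := by
      refine squeeze_zero_norm' (a := fun ε : ℝ => 12 * ε) ?_ ?_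
      · filter_upwards [self_mem_nhdsWithin] with ε hε
        exact key2 ε hε
      · have : Tendsto (fun ε : ℝ => 12 * ε) (nhds 0) (nhds 0) := by
          have := ((continuous_id.tendsto (0:ℝ)).const_mul (12:ℝ))
          simpa using this
        exact this.mono_left nhdsWithin_le_nhds
    have := hhalf.add T2
    simp only [add_sub_cancel] at this
    simpa using this
end
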